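/- arXiv:1609.05988 — 10 statements merged into one kernel-verified Lean document; each statement's English description precedes it below -/
import Mathlib

section
/- Let C be a commutative ring containing the rational numbers and let R(t) be a formal power series over C. Then there exists a unique formal power series f(x) over C with zero constant term satisfying f(x) = x·R(f(x)) (the composition R(f) being well-defined since f has zero constant term). -/
open PowerSeries

/-- Composition `φ(f)` of formal power series, which is the correct notion of
substitution of `f` into `φ` whenever `f` has zero constant term (in that case
`f ^ n` has order at least `n`, so the coefficient of `x^m` in `φ(f) = ∑ₙ φₙ fⁿ`
only receives contributions from `n ≤ m`). -/
noncomputable def psComp {A : Type*} [CommRing A] (φ f : PowerSeries A) : PowerSeries A :=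
  PowerSeries.mk fun m => ∑ n ∈ Finset.range (m + 1), coeff n φ * coeff m (f ^ n)

private lemma coeff_pow_agree {A : Type*} [CommRing A] (k : ℕ) :
    ∀ (j : ℕ) (f g : PowerSeries A), (∀ i ≤ j, coeff i f = coeff i g) →
      coeff j (f ^ k) = coeff j (g ^ k) := by
  induction k with
  | zero => intro j f g h; simp
  | succ k ih =>
    intro j f g h
    rw [pow_succ, pow_succ, PowerSeries.coeff_mul, PowerSeries.coeff_mul]
    refine Finset.sum_congr rfl fun p hp => ?_
    rw [Finset.HasAntidiagonal.mem_antidiagonal] at hp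
    have h1 : p.1 ≤ j := by omega
    have h2 : p.2 ≤ j := by omega
    rw [ih p.1 f g (fun i hi => h i (hi.trans h1)), h p.2 h2]

private lemma key {A : Type*} [CommRing A] (R : PowerSeries A) {n : ℕ} {f g : PowerSeries A}
    (h : ∀ i ≤ n, coeff i f = coeff i g) :
    ∀ i ≤ n + 1, coeff i (X * psComp R f) = coeff i (X * psComp R g) := by
  intro i hi
  cases i with
  | zero => simp
  | succ j =>
    rw [PowerSeries.coeff_succ_X_mul, PowerSeries.coeff_succ_X_mul]
    simp only [psComp, PowerSeries.coeff_mk]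
    refine Finset.sum_congr rfl fun k _ => ?_
    rw [coeff_pow_agree k j f g (fun i hij => h i (by omega))]

/-- Let `C` be a commutative ring containing the rationals and `R(t)` a formal power
series over `C`.  Then there is a unique formal power series `f` with zero constant
term satisfying `f = X · R(f)`. -/
theorem exists_unique_lagrange_solution (C : Type*) [CommRing C] [Algebra ℚ C]
    (R : PowerSeries C) :
    ∃! f : PowerSeries C, constantCoeff f = 0 ∧ f = X * psComp R f := by
  -- Picard iteration
  set T : PowerSeries C → PowerSeries C := fun f => X * psComp R f with hT
  let F : ℕ → PowerSeries C := fun n => T^[n] 0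
  have hF : ∀ n, F (n + 1) = T (F n) := by
    intro n; simp only [F, Function.iterate_succ_apply']
  -- stabilization
  have stab : ∀ n, ∀ i ≤ n, coeff i (F n) = coeff i (F (n + 1)) := by
    intro n
    induction n with
    | zero =>
      intro i hi
      interval_cases i
      have : constantCoeff (F 1) = 0 := by
        rw [hF 0, hT]; simp
      simpa [PowerSeries.coeff_zero_eq_constantCoeff, F] using this.symm
    | succ n ih =>
      intro i hi
      rw [hF, hF]
      exact key R ih i hi
  have stab' : ∀ m n i, i ≤ n → n ≤ m → coeff i (F n) = coeff i (F m) := by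
    intro m
    induction m with
    | zero => intro n i hin hnm; rw [Nat.le_zero.mp hnm]
    | succ m ih =>
      intro n i hin hnm
      rcases Nat.lt_or_ge n (m + 1) with h | h
      · rw [ih n i hin (by omega), stab m i (by omega)]
      · have : n = m + 1 := by omega
        subst this; rfl
  set f : PowerSeries C := PowerSeries.mk (fun n => coeff n (F n)) with hf
  have hfc : ∀ n i, i ≤ n → coeff i f = coeff i (F n) := by
    intro n i hin
    rw [hf, PowerSeries.coeff_mk]
    exact stab' n i i le_rfl hin
  have hfix : f = T f := by
    ext i
    have h1 : coeff i (T f) = coeff i (T (F i)) := by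
      have := key R (n := i) (f := f) (g := F i) (fun j hj => hfc i j hj)
      exact this i (by omega)
    rw [h1, ← hF, ← stab i i le_rfl, hf, PowerSeries.coeff_mk]
  have hf0 : constantCoeff f = 0 := by
    have := hfc 0 0 le_rfl
    simpa [PowerSeries.coeff_zero_eq_constantCoeff, F] using this
  refine ⟨f, ⟨hf0, hfix⟩, ?_⟩
  rintro g ⟨hg0, hgfix⟩
  ext i
  induction i using Nat.strong_induction_on with
  | _ i ih =>
    cases i with
    | zero =>
      simp only [PowerSeries.coeff_zero_eq_constantCoeff]
      rw [hg0, hf0]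
    | succ j =>
      rw [hgfix, hfix]
      exact key R (n := j) (fun i hij => ih i (by omega)) (j + 1) le_rfl
end

section
/- Let C be a commutative ring containing the rational numbers, let R(t) be a formal power series over C, and let f be the unique formal power series with zero constant term satisfying f = x·R(f). Then for every formal power series ψ(t) over C and every integer n ≥ 0, [x^n] ( ψ(f) · (1 − x·R'(f))^{-1} ) = [t^n] ( ψ(t)·R(t)^n ), where the power series 1 − x·R'(f) has constant term 1 and hence is invertible in C[[x]]. -/
open PowerSeries

section Aux

open Finset

variable {C : Type*} [CommRing C]

lemma psComp_coeff (φ f : PowerSeries C) (m : ℕ) :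
    coeff m (psComp φ f) = ∑ j ∈ range (m + 1), coeff j φ * coeff m (f ^ j) := by
  simp [psComp]

lemma aux_coeff_pow_eq_zero {f W : PowerSeries C} (hf : f = X * W) {i j : ℕ} (h : i < j) :
    coeff i (f ^ j) = 0 := by
  rw [hf, mul_pow, coeff_X_pow_mul', if_neg (by omega)]

lemma aux_coeff_psComp_le {f W : PowerSeries C} (hf : f = X * W) (φ : PowerSeries C)
    {i m : ℕ} (him : i ≤ m) :
    coeff i (psComp φ f) = ∑ j ∈ range (m + 1), coeff j φ * coeff i (f ^ j) := by
  rw [psComp_coeff]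
  apply Finset.sum_subset
  · exact Finset.range_subset_range.2 (by omega)
  · intro j hj hj'
    simp only [mem_range] at hj hj'
    rw [aux_coeff_pow_eq_zero hf (by omega), mul_zero]

/-- Expansion of a coefficient of `psComp φ f * T` when `f = X * W`. -/
lemma aux_coeff_psComp_mul {f W : PowerSeries C} (hf : f = X * W) (φ T : PowerSeries C)
    (m : ℕ) :
    coeff m (psComp φ f * T) =
      ∑ j ∈ range (m + 1), coeff j φ * coeff m (f ^ j * T) := by
  rw [coeff_mul]
  calc ∑ p ∈ antidiagonal m, coeff p.1 (psComp φ f) * coeff p.2 T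
      = ∑ p ∈ antidiagonal m, ∑ j ∈ range (m + 1),
          coeff j φ * (coeff p.1 (f ^ j) * coeff p.2 T) := by
        refine Finset.sum_congr rfl fun p hp => ?_
        rw [aux_coeff_psComp_le hf φ (Finset.HasAntidiagonal.antidiagonal.fst_le hp), Finset.sum_mul]
        simp [mul_assoc]
    _ = ∑ j ∈ range (m + 1), coeff j φ * coeff m (f ^ j * T) := by
        rw [Finset.sum_comm]
        refine Finset.sum_congr rfl fun j _ => ?_
        rw [← Finset.mul_sum, coeff_mul]

lemma aux_coeff_mul_range (a b : PowerSeries C) (m : ℕ) :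
    coeff m (a * b) = ∑ j ∈ range (m + 1), coeff j a * coeff (m - j) b := by
  rw [coeff_mul, Finset.Nat.sum_antidiagonal_eq_sum_range_succ
    (fun i j => coeff i a * coeff j b)]

lemma aux_cancel_nat {C : Type*} [CommRing C] [Algebra ℚ C] (a : ℕ) (ha : a ≠ 0)
    {x y : C} (h : a • x = a • y) : x = y := by
  have h2 : (a : ℚ) • x = (a : ℚ) • y := by
    rw [Nat.cast_smul_eq_nsmul, Nat.cast_smul_eq_nsmul]; exact h
  have h3 := congrArg (fun z => (a : ℚ)⁻¹ • z) h2
  have ha' : (a : ℚ) ≠ 0 := by exact_mod_cast ha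
  simpa [smul_smul, inv_mul_cancel₀ ha'] using h3

end Aux

/-- Lagrange inversion, form (1d): if `f = X·R(f)` with `f` of zero constant term, then
for any power series `ψ` and `n ≥ 0`,
`[xⁿ] ( ψ(f)·(1 − X·R'(f))⁻¹ ) = [tⁿ] ( ψ(t)·R(t)ⁿ )`.
Here `1 − X·R'(f)` has constant term `1`, so it is invertible, its inverse being
`invOfUnit _ 1`. -/
theorem lagrange_inversion_diagonal_form (C : Type*) [CommRing C] [Algebra ℚ C]
    (R f : PowerSeries C) (hf0 : constantCoeff f = 0) (hf : f = X * psComp R f)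
    (ψ : PowerSeries C) (n : ℕ) :
    coeff n (psComp ψ f * invOfUnit (1 - X * psComp (d⁄dX C R) f) 1) =
      coeff n (ψ * R ^ n) := by
  classical
  set W : PowerSeries C := psComp R f with hW
  set W' : PowerSeries C := psComp (d⁄dX C R) f with hW'
  set G : PowerSeries C := invOfUnit (1 - X * W') 1 with hG
  have hunit : constantCoeff (1 - X * W' : PowerSeries C) = ((1 : Cˣ) : C) := by
    simp [map_sub, map_mul, constantCoeff_X]
  have hmul : (1 - X * W') * G = 1 := mul_invOfUnit _ 1 hunit
  have hGrec : G = 1 + X * (W' * G) := by linear_combination hmul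
  have hG0 : coeff 0 G = 1 := by
    have := constantCoeff_invOfUnit (1 - X * W') 1
    simpa [hG, coeff_zero_eq_constantCoeff] using this
  -- the key identity
  have key : ∀ m : ℕ, ∀ k : ℕ, coeff m (W ^ k * G) = coeff m (R ^ (m + k)) := by
    intro m
    induction m using Nat.strong_induction_on with
    | _ m ih =>
      intro k
      induction k with
      | zero =>
        rcases Nat.eq_zero_or_pos m with hm | hm
        · subst hm; simpa using hG0
        · obtain ⟨m', rfl⟩ : ∃ m', m = m' + 1 :=
            ⟨m - 1, by omega⟩
          simp only [pow_zero, one_mul]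
          have step1 : coeff (m' + 1) G = coeff m' (W' * G) := by
            conv_lhs => rw [hGrec]
            rw [map_add, coeff_succ_X_mul]
            simp [coeff_one]
          have step2 : coeff m' (W' * G) =
              ∑ j ∈ Finset.range (m' + 1),
                coeff j (d⁄dX C R) * coeff (m' - j) (R ^ m') := by
            rw [hW', aux_coeff_psComp_mul hf (d⁄dX C R) G m']
            refine Finset.sum_congr rfl fun j hj => ?_
            simp only [Finset.mem_range] at hj
            have hj' : j ≤ m' := by omega
            have hfj : f ^ j * G = X ^ j * (W ^ j * G) := by
              rw [hf, mul_pow, mul_assoc]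
            rw [hfj, coeff_X_pow_mul', if_pos hj', ih (m' - j) (by omega) j,
              Nat.sub_add_cancel hj']
          have step3 : coeff m' (W' * G) = coeff m' (d⁄dX C R * R ^ m') := by
            rw [step2, aux_coeff_mul_range]
          -- now use derivatives to identify with coeff (m'+1) (R^(m'+1))
          have hder : d⁄dX C (R ^ (m' + 1)) = (m' + 1) • (R ^ m' * d⁄dX C R) := by
            have := Derivation.leibniz_pow (d⁄dX C) (a := R) (m' + 1)
            simpa [smul_eq_mul, Nat.add_sub_cancel] using this
          have hsm : (m' + 1) • coeff (m' + 1) (R ^ (m' + 1)) =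
              (m' + 1) • coeff m' (d⁄dX C R * R ^ m') := by
            have h1 := coeff_derivative (R ^ (m' + 1)) m'
            rw [hder] at h1
            rw [map_nsmul] at h1
            rw [mul_comm (d⁄dX C R), h1, nsmul_eq_mul]
            push_cast
            ring
          have := aux_cancel_nat (m' + 1) (by omega) hsm
          rw [step1, step3, ← this]
      | succ k IHk =>
        have hsplit : W ^ (k + 1) * G = W * (W ^ k * G) := by ring
        rw [hsplit, hW, aux_coeff_psComp_mul hf R (W ^ k * G) m]
        have step : ∀ j ∈ Finset.range (m + 1),
            coeff j R * coeff m (f ^ j * (W ^ k * G)) =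
              coeff j R * coeff (m - j) (R ^ (m + k)) := by
          intro j hj
          simp only [Finset.mem_range] at hj
          have hj' : j ≤ m := by omega
          have hfj : f ^ j * (W ^ k * G) = X ^ j * (W ^ (k + j) * G) := by
            rw [hf, mul_pow, pow_add]; ring
          rw [hfj, coeff_X_pow_mul', if_pos hj']
          congr 1
          rcases Nat.eq_zero_or_pos j with rfl | hjpos
          · simpa using IHk
          · rw [ih (m - j) (by omega) (k + j)]
            have he : m - j + (k + j) = m + k := by omega
            rw [he]
        rw [Finset.sum_congr rfl step, ← aux_coeff_mul_range R (R ^ (m + k)) m]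
        rw [← pow_succ', Nat.add_assoc]
  -- assemble
  rw [aux_coeff_psComp_mul hf ψ _ n, aux_coeff_mul_range ψ (R ^ n) n]
  refine Finset.sum_congr rfl fun k hk => ?_
  simp only [Finset.mem_range] at hk
  have hk' : k ≤ n := by omega
  have hfk : f ^ k * G = X ^ k * (W ^ k * G) := by
    rw [hf, mul_pow, mul_assoc]
  rw [hfk, coeff_X_pow_mul', if_pos hk', key (n - k) k, Nat.sub_add_cancel hk']
end

section
/- (Schur–Jabotinsky theorem.) Let K be a field of characteristic zero, let f(x) = c₁x + c₂x² + ⋯ be a formal power series over K with c₁ ≠ 0, and let g = f^{⟨−1⟩} be its compositional inverse, so g(f(x)) = f(g(x)) = x. Regard f and g as elements of the field of formal Laurent series K((x)), so that all integer powers f^k and g^k are defined. Then for all integers k and all integers n ≠ 0, n·[x^n](f^k) = k·[x^{−k}](g^{−n}), where [x^m] denotes the coefficient of x^m in a Laurent series. -/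
open PowerSeries

namespace SJ

variable {K : Type*} [Field K]

lemma coeff_psComp (φ f : PowerSeries K) (m : ℕ) :
    coeff m (psComp φ f) = ∑ r ∈ Finset.range (m+1), coeff r φ * coeff m (f ^ r) := by
  simp [psComp]

lemma coeff_Xu_pow (u : K⟦X⟧) (i p : ℕ) :
    coeff p ((X*u)^i) = if i ≤ p then coeff (p-i) (u^i) else 0 := by
  rw [mul_pow, coeff_X_pow_mul']

lemma coeff_psComp' (φ u : K⟦X⟧) (m N : ℕ) (hm : m < N) :
    coeff m (psComp φ (X*u)) = ∑ r ∈ Finset.range N, coeff r φ * coeff m ((X*u) ^ r) := by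
  rw [coeff_psComp]
  apply Finset.sum_subset (Finset.range_subset_range.mpr hm)
  intro r hr hr'
  simp only [Finset.mem_range] at hr hr'
  rw [coeff_Xu_pow, if_neg (by omega), mul_zero]

lemma coeff_mul_psComp (Q φ u : K⟦X⟧) (m : ℕ) :
    coeff m (Q * psComp φ (X*u)) =
      ∑ r ∈ Finset.range (m+1), coeff r φ * coeff m (Q * (X*u) ^ r) := by
  rw [coeff_mul]
  have h : ∀ p ∈ Finset.HasAntidiagonal.antidiagonal m, coeff p.1 Q * coeff p.2 (psComp φ (X*u))
      = ∑ r ∈ Finset.range (m+1), coeff r φ * (coeff p.1 Q * coeff p.2 ((X*u)^r)) := by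
    intro p hp
    have hp2 : p.2 < m + 1 := by
      have := Finset.HasAntidiagonal.mem_antidiagonal.mp hp; omega
    rw [coeff_psComp' φ u p.2 (m+1) hp2, Finset.mul_sum]
    exact Finset.sum_congr rfl fun r _ => by ring
  rw [Finset.sum_congr rfl h, Finset.sum_comm]
  exact Finset.sum_congr rfl fun r _ => by rw [coeff_mul, Finset.mul_sum]

lemma sum_triangle_eq (m : ℕ) (F : ℕ → ℕ → K) (hF : ∀ i j, m < i + j → F i j = 0) :
    ∑ s ∈ Finset.range (m+1), ∑ ij ∈ Finset.HasAntidiagonal.antidiagonal s, F ij.1 ij.2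
      = ∑ i ∈ Finset.range (m+1), ∑ j ∈ Finset.range (m+1), F i j := by
  classical
  have hdisj : (↑(Finset.range (m+1)) : Set ℕ).PairwiseDisjoint Finset.HasAntidiagonal.antidiagonal := by
    intro a _ b _ hab
    simp only [Function.onFun]
    rw [Finset.disjoint_left]
    intro ij hija hijb
    exact hab ((Finset.HasAntidiagonal.mem_antidiagonal.mp hija).symm.trans (Finset.HasAntidiagonal.mem_antidiagonal.mp hijb))
  rw [← Finset.sum_biUnion hdisj]
  have hset : (Finset.range (m+1)).biUnion Finset.HasAntidiagonal.antidiagonal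
      = (Finset.range (m+1) ×ˢ Finset.range (m+1)).filter (fun ij => ij.1 + ij.2 ≤ m) := by
    ext ⟨i, j⟩
    simp only [Finset.mem_biUnion, Finset.mem_range, Finset.HasAntidiagonal.mem_antidiagonal, Finset.mem_filter,
      Finset.mem_product]
    constructor
    · rintro ⟨s, hs, rfl⟩; omega
    · rintro ⟨⟨_, _⟩, h⟩; exact ⟨i + j, by omega, rfl⟩
  rw [hset, ← Finset.sum_product']
  apply Finset.sum_subset (Finset.filter_subset _ _)
  intro ij _ hij
  simp only [Finset.mem_filter, Finset.mem_product, not_and, not_le] at hij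
  by_cases h1 : ij.1 ∈ Finset.range (m+1) ∧ ij.2 ∈ Finset.range (m+1)
  · exact hF _ _ (hij ⟨h1.1, h1.2⟩)
  · -- ij in product set so this can't happen; but we came from the product set
    exact hF _ _ (by
      rcases not_and_or.mp h1 with h | h <;> simp only [Finset.mem_range, not_lt] at h <;> omega)


noncomputable def psCompHom (u : K⟦X⟧) : K⟦X⟧ →+* K⟦X⟧ where
  toFun φ := psComp φ (X*u)
  map_zero' := by ext m; simp [coeff_psComp]
  map_add' φ ψ := by ext m; simp [coeff_psComp, add_mul, Finset.sum_add_distrib]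
  map_one' := by
    ext m
    rw [coeff_psComp, Finset.sum_eq_single 0]
    · simp
    · intro r _ hr; simp [coeff_one, hr]
    · intro h; simp at h
  map_mul' φ ψ := by
    ext m
    have hLHS : coeff m (psComp (φ * ψ) (X*u))
        = ∑ s ∈ Finset.range (m+1), ∑ ij ∈ Finset.HasAntidiagonal.antidiagonal s,
            coeff ij.1 φ * coeff ij.2 ψ * coeff m ((X*u) ^ (ij.1 + ij.2)) := by
      rw [coeff_psComp]
      apply Finset.sum_congr rfl
      intro s _
      rw [coeff_mul, Finset.sum_mul]
      apply Finset.sum_congr rfl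
      intro ij hij
      rw [Finset.HasAntidiagonal.mem_antidiagonal.mp hij]
    have hRHS : coeff m (psComp φ (X*u) * psComp ψ (X*u))
        = ∑ j ∈ Finset.range (m+1), ∑ i ∈ Finset.range (m+1),
            coeff j ψ * (coeff i φ * coeff m ((X*u) ^ (j + i))) := by
      rw [coeff_mul_psComp (psComp φ (X*u)) ψ u m]
      apply Finset.sum_congr rfl
      intro j _
      rw [mul_comm (psComp φ (X*u)) ((X*u)^j), coeff_mul_psComp ((X*u)^j) φ u m,
        Finset.mul_sum]
      apply Finset.sum_congr rfl
      intro i _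
      rw [← pow_add]
    have hF : ∀ i j, m < i + j →
        coeff i φ * coeff j ψ * coeff m ((X*u) ^ (i+j)) = 0 := by
      intro i j hij
      rw [coeff_Xu_pow, if_neg (by omega), mul_zero]
    show coeff m (psComp (φ * ψ) (X*u)) = coeff m (psComp φ (X*u) * psComp ψ (X*u))
    rw [hLHS, hRHS,
      sum_triangle_eq m (fun i j => coeff i φ * coeff j ψ * coeff m ((X*u) ^ (i+j))) hF,
      Finset.sum_comm]
    apply Finset.sum_congr rfl; intro j _
    apply Finset.sum_congr rfl; intro i _
    rw [add_comm j i]; ring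

lemma psCompHom_apply (u φ : K⟦X⟧) : psCompHom u φ = psComp φ (X*u) := rfl

lemma psCompHom_X (u : K⟦X⟧) : psCompHom u X = X * u := by
  ext m
  rw [psCompHom_apply, coeff_psComp, Finset.sum_eq_single 1]
  · rw [coeff_X, if_pos rfl, one_mul, pow_one]
  · intro r _ hr; rw [coeff_X, if_neg hr, zero_mul]
  · intro h
    simp only [Finset.mem_range, not_lt] at h
    have hm0 : m = 0 := by omega
    subst hm0
    rw [coeff_X, if_pos rfl, one_mul, pow_one, coeff_zero_X_mul]


lemma uval_add (U : K⟦X⟧ˣ) (a b : ℤ) :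
    ((U^(a+b) : K⟦X⟧ˣ) : K⟦X⟧) = ((U^a : K⟦X⟧ˣ) : K⟦X⟧) * ((U^b : K⟦X⟧ˣ) : K⟦X⟧) := by
  rw [zpow_add, Units.val_mul]

lemma uval_nat (U : K⟦X⟧ˣ) (n : ℕ) :
    ((U^(n:ℤ) : K⟦X⟧ˣ) : K⟦X⟧) = ((U^n : K⟦X⟧ˣ) : K⟦X⟧) := by
  rw [zpow_natCast]

lemma deriv_pow_succ (U : K⟦X⟧ˣ) (n : ℕ) :
    d⁄dX K ((U^(n+1) : K⟦X⟧ˣ) : K⟦X⟧)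
      = C ((n:K)+1) * (((U^n : K⟦X⟧ˣ) : K⟦X⟧) * d⁄dX K (U : K⟦X⟧)) := by
  induction n with
  | zero => simp
  | succ n ih =>
    have h2 : ((U^(n+2) : K⟦X⟧ˣ) : K⟦X⟧) = ((U^(n+1) : K⟦X⟧ˣ) : K⟦X⟧) * (U : K⟦X⟧) := by
      rw [← Units.val_mul, pow_succ]
    have hval : ((U^(n+1) : K⟦X⟧ˣ) : K⟦X⟧) = ((U^n : K⟦X⟧ˣ) : K⟦X⟧) * (U : K⟦X⟧) := by
      rw [← Units.val_mul, pow_succ]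
    rw [h2, Derivation.leibniz, ih, smul_eq_mul, smul_eq_mul, hval]
    push_cast [map_add, map_one]
    ring

lemma deriv_zpow (U : K⟦X⟧ˣ) (a : ℤ) :
    d⁄dX K ((U^a : K⟦X⟧ˣ) : K⟦X⟧)
      = C ((a:ℤ) : K) * (((U^(a-1) : K⟦X⟧ˣ) : K⟦X⟧) * d⁄dX K (U : K⟦X⟧)) := by
  obtain ⟨n, rfl | rfl⟩ := Int.eq_nat_or_neg a
  · cases n with
    | zero => simp
    | succ n =>
      rw [show ((n+1:ℕ):ℤ) - 1 = (n:ℤ) by push_cast; ring, uval_nat, uval_nat,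
        deriv_pow_succ]
      push_cast
      ring
  · cases n with
    | zero => simp
    | succ n =>
      set a : ℤ := -((n+1:ℕ):ℤ) with ha
      have h0 : a + ((n+1:ℕ):ℤ) = 0 := by rw [ha]; ring
      have hu1 : U^a * U^(n+1) = 1 := by
        rw [← zpow_natCast U (n+1), ← zpow_add, h0, zpow_zero]
      have key : ((U^a : K⟦X⟧ˣ) : K⟦X⟧) * ((U^(n+1) : K⟦X⟧ˣ) : K⟦X⟧) = 1 := by
        rw [← Units.val_mul, hu1, Units.val_one]
      have hd := congrArg (d⁄dX K) key
      rw [Derivation.leibniz, Derivation.map_one_eq_zero, deriv_pow_succ, smul_eq_mul,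
        smul_eq_mul] at hd
      have hmul := congrArg (fun w => ((U^a : K⟦X⟧ˣ) : K⟦X⟧) * w) hd
      simp only [mul_add, mul_zero] at hmul
      have hone : ((U^a : K⟦X⟧ˣ) : K⟦X⟧) * (((U^(n+1) : K⟦X⟧ˣ) : K⟦X⟧) * d⁄dX K ((U^a : K⟦X⟧ˣ) : K⟦X⟧)) = d⁄dX K ((U^a : K⟦X⟧ˣ) : K⟦X⟧) := by
        rw [← mul_assoc, key, one_mul]
      rw [hone] at hmul
      have hcomb : ((U^a : K⟦X⟧ˣ) : K⟦X⟧) * ((U^a : K⟦X⟧ˣ) : K⟦X⟧) * ((U^n : K⟦X⟧ˣ) : K⟦X⟧)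
          = ((U^(a-1) : K⟦X⟧ˣ) : K⟦X⟧) := by
        rw [← uval_nat U n, ← uval_add, ← uval_add]
        congr 1
        rw [ha]; push_cast; ring
      have hexp : d⁄dX K ((U^a : K⟦X⟧ˣ) : K⟦X⟧)
          = - (((U^a : K⟦X⟧ˣ) : K⟦X⟧) * (((U^a : K⟦X⟧ˣ) : K⟦X⟧) * (C ((n:K)+1) * (((U^n : K⟦X⟧ˣ) : K⟦X⟧) * d⁄dX K (U : K⟦X⟧))))) := by
        linear_combination hmul
      have hCa : C (((a:ℤ)):K) = -(C ((n:K)+1)) := by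
        rw [show (((a:ℤ)):K) = -((n:K)+1) by rw [ha]; push_cast; ring, map_neg]
      rw [hexp, hCa]
      linear_combination (-(C ((n:K)+1)) * d⁄dX K (U:K⟦X⟧)) * hcomb

lemma coeff_X_mul_of_pos (w : K⟦X⟧) (s : ℕ) (hs : 1 ≤ s) :
    coeff s (X * w) = coeff (s-1) w := by
  conv_lhs => rw [show s = (s-1)+1 by omega]
  rw [coeff_succ_X_mul]

variable [CharZero K]

lemma ort (U : K⟦X⟧ˣ) (s : ℕ) (hs : 1 ≤ s) :
    coeff s ((U^(-(s:ℤ)) : K⟦X⟧ˣ) : K⟦X⟧)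
      + coeff (s-1) (((U^(-(s:ℤ)-1) : K⟦X⟧ˣ) : K⟦X⟧) * d⁄dX K (U : K⟦X⟧)) = 0 := by
  have hD := congrArg (coeff (s-1)) (deriv_zpow U (-(s:ℤ)))
  rw [coeff_derivative, coeff_C_mul] at hD
  rw [show s - 1 + 1 = s by omega] at hD
  have hs0 : ((s:K)) ≠ 0 := Nat.cast_ne_zero.mpr (by omega)
  have : (s:K) * (coeff s ((U^(-(s:ℤ)) : K⟦X⟧ˣ) : K⟦X⟧)
      + coeff (s-1) (((U^(-(s:ℤ)-1) : K⟦X⟧ˣ) : K⟦X⟧) * d⁄dX K (U : K⟦X⟧))) = 0 := by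
    push_cast [Nat.cast_sub hs] at hD ⊢
    rw [show ((s:K) - 1 + 1) = (s:K) by ring] at hD
    linear_combination hD
  exact (mul_eq_zero.mp this).resolve_left hs0

lemma key_of (U V : K⟦X⟧ˣ) (h : psCompHom (U:K⟦X⟧) (V:K⟦X⟧) = ((U⁻¹ : K⟦X⟧ˣ) : K⟦X⟧))
    (a : ℤ) : psCompHom (U:K⟦X⟧) ((V^a : K⟦X⟧ˣ) : K⟦X⟧) = ((U^(-a) : K⟦X⟧ˣ) : K⟦X⟧) := by
  have hmap : Units.map (psCompHom (U:K⟦X⟧)).toMonoidHom V = U⁻¹ := by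
    apply Units.ext
    simpa using h
  have h2 : Units.map (psCompHom (U:K⟦X⟧)).toMonoidHom (V^a) = U^(-a) := by
    rw [map_zpow, hmap, inv_zpow, ← zpow_neg]
  calc (psCompHom (U:K⟦X⟧)) ((V^a : K⟦X⟧ˣ) : K⟦X⟧)
      = ((Units.map (psCompHom (U:K⟦X⟧)).toMonoidHom (V^a) : K⟦X⟧ˣ) : K⟦X⟧) := by
        rw [Units.coe_map]; rfl
    _ = _ := by rw [h2]

lemma main_lemma (U V : K⟦X⟧ˣ)
    (hkey : ∀ a : ℤ, psCompHom (U:K⟦X⟧) ((V^a : K⟦X⟧ˣ) : K⟦X⟧) = ((U^(-a) : K⟦X⟧ˣ) : K⟦X⟧))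
    (k n : ℤ) (m : ℕ) (hnm : n = k + m) :
    coeff m ((V^(-n) : K⟦X⟧ˣ) : K⟦X⟧)
      = coeff m ((U^k : K⟦X⟧ˣ) : K⟦X⟧)
        + coeff m (X * (((U^(k-1) : K⟦X⟧ˣ) : K⟦X⟧) * d⁄dX K (U : K⟦X⟧))) := by
  set du := d⁄dX K (U : K⟦X⟧) with hdu
  set R : K⟦X⟧ := ((U^(k-n) : K⟦X⟧ˣ) : K⟦X⟧) + X * (((U^(k-n-1) : K⟦X⟧ˣ) : K⟦X⟧) * du)
    with hR
  have hA : ((U^(k-n) : K⟦X⟧ˣ) : K⟦X⟧) * ((U^n : K⟦X⟧ˣ) : K⟦X⟧) = ((U^k : K⟦X⟧ˣ) : K⟦X⟧) := by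
    rw [← uval_add]; congr 1; ring
  have hB : ((U^(k-n-1) : K⟦X⟧ˣ) : K⟦X⟧) * ((U^n : K⟦X⟧ˣ) : K⟦X⟧) = ((U^(k-1) : K⟦X⟧ˣ) : K⟦X⟧) := by
    rw [← uval_add]; congr 1; ring
  have step0 : ((U^k : K⟦X⟧ˣ) : K⟦X⟧) + X * (((U^(k-1) : K⟦X⟧ˣ) : K⟦X⟧) * du)
      = R * ((U^n : K⟦X⟧ˣ) : K⟦X⟧) := by
    rw [hR, add_mul]
    congr 1
    · exact hA.symm
    · linear_combination (X * du) * hB.symm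
  have step1 : coeff m (((U^k : K⟦X⟧ˣ) : K⟦X⟧) + X * (((U^(k-1) : K⟦X⟧ˣ) : K⟦X⟧) * du))
      = coeff m ((V^(-n) : K⟦X⟧ˣ) : K⟦X⟧) := by
    rw [step0]
    have h2 := hkey (-n)
    rw [show -(-n) = n from neg_neg n] at h2
    rw [← h2, psCompHom_apply, coeff_mul_psComp]
    -- now each term: coeff m (R * (X*U)^r) = if r = m then 1 else 0
    have hterm : ∀ r, r ∈ Finset.range (m+1) →
        coeff r ((V^(-n) : K⟦X⟧ˣ) : K⟦X⟧) * coeff m (R * (X*(U:K⟦X⟧)) ^ r)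
          = if r = m then coeff r ((V^(-n) : K⟦X⟧ˣ) : K⟦X⟧) else 0 := by
      intro r hr
      rw [Finset.mem_range] at hr
      have hrm : r ≤ m := by omega
      have hpow : (X*(U:K⟦X⟧))^r = X^r * ((U^r : K⟦X⟧ˣ) : K⟦X⟧) := by
        rw [mul_pow, Units.val_pow_eq_pow_val]
      have hRw : R * (X*(U:K⟦X⟧))^r
          = X^r * (((U^(k-n+r) : K⟦X⟧ˣ) : K⟦X⟧)
              + X * (((U^(k-n-1+r) : K⟦X⟧ˣ) : K⟦X⟧) * du)) := by
        rw [hpow, hR]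
        have e1 : ((U^(k-n+r) : K⟦X⟧ˣ) : K⟦X⟧)
            = ((U^(k-n) : K⟦X⟧ˣ) : K⟦X⟧) * ((U^r : K⟦X⟧ˣ) : K⟦X⟧) := by
          rw [← uval_nat, ← uval_add]
        have e2 : ((U^(k-n-1+r) : K⟦X⟧ˣ) : K⟦X⟧)
            = ((U^(k-n-1) : K⟦X⟧ˣ) : K⟦X⟧) * ((U^r : K⟦X⟧ˣ) : K⟦X⟧) := by
          rw [← uval_nat, ← uval_add]
        rw [e1, e2]; ring
      rw [hRw, coeff_X_pow_mul' _ r m, if_pos hrm]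
      set s : ℕ := m - r with hsdef
      have hsr : k - n + r = -(s:ℤ) := by omega
      have hsr' : k - n - 1 + r = -(s:ℤ) - 1 := by omega
      rw [hsr, hsr', map_add]
      by_cases hrm' : r = m
      · have hs0 : s = 0 := by omega
        rw [if_pos hrm', hs0]
        norm_num [coeff_zero_X_mul]
      · rw [if_neg hrm']
        have hs1 : 1 ≤ s := by omega
        have hort := ort U s hs1
        rw [← hdu] at hort
        rw [coeff_X_mul_of_pos _ s hs1, hort, mul_zero]
    rw [Finset.sum_congr rfl hterm, Finset.sum_ite_eq' (Finset.range (m+1)) m]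
    rw [if_pos (Finset.self_mem_range_succ m)]
  exact step1.symm


lemma single_zpow (k : ℤ) :
    (HahnSeries.single (1:ℤ) (1:K)) ^ k = HahnSeries.single k (1:K) := by
  obtain ⟨j, rfl | rfl⟩ := Int.eq_nat_or_neg k
  · rw [zpow_natCast, HahnSeries.single_pow]
    norm_num
  · rw [zpow_neg, zpow_natCast, HahnSeries.single_pow]
    norm_num

lemma coe_unit_zpow (w : K⟦X⟧ˣ) (k : ℤ) :
    ((w : K⟦X⟧) : LaurentSeries K) ^ k = (((w^k : K⟦X⟧ˣ) : K⟦X⟧) : LaurentSeries K) := by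
  obtain ⟨j, rfl | rfl⟩ := Int.eq_nat_or_neg k
  · rw [zpow_natCast, zpow_natCast, Units.val_pow_eq_pow_val, map_pow]
  · rw [zpow_neg, zpow_natCast]
    have h1 : (((w ^ (-(j:ℤ)) : K⟦X⟧ˣ) : K⟦X⟧) : LaurentSeries K) *
        (((w : K⟦X⟧) : LaurentSeries K) ^ j) = 1 := by
      rw [← map_pow, ← map_mul, ← Units.val_pow_eq_pow_val, ← Units.val_mul,
        ← zpow_natCast w j, ← zpow_add]
      norm_num
    exact inv_eq_of_mul_eq_one_left h1

lemma coeff_coe_zpow (U : K⟦X⟧ˣ) (k n : ℤ) :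
    ((((X * (U : K⟦X⟧) : K⟦X⟧) : LaurentSeries K)) ^ k).coeff n
      = if 0 ≤ n - k then coeff (n-k).toNat ((U^k : K⟦X⟧ˣ) : K⟦X⟧) else 0 := by
  have hsplit : ((X * (U : K⟦X⟧) : K⟦X⟧) : LaurentSeries K)
      = HahnSeries.single (1:ℤ) (1:K) * (((U : K⟦X⟧)) : LaurentSeries K) := by
    rw [map_mul, PowerSeries.coe_X]
  rw [hsplit, mul_zpow, single_zpow, coe_unit_zpow]
  have := HahnSeries.coeff_single_mul_add
    (r := (1:K)) (x := ((((U^k : K⟦X⟧ˣ) : K⟦X⟧)) : LaurentSeries K)) (a := n - k) (b := k)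
  rw [sub_add_cancel] at this
  rw [this, one_mul, PowerSeries.coeff_coe]
  split_ifs with h1 h2 h2
  · omega
  · rfl
  · rw [show (n-k).natAbs = (n-k).toNat by omega]
  · omega


end SJ

open SJ in
/-- The Schur–Jabotinsky theorem: if `f = c₁x + c₂x² + ⋯` with `c₁ ≠ 0` and `g` is its
compositional inverse (`g(f(x)) = f(g(x)) = x`), then regarding `f` and `g` as nonzero
elements of the field of formal Laurent series `K((x))`, for all integers `k` and all
integers `n ≠ 0` we have `n·[xⁿ](f^k) = k·[x^{−k}](g^{−n})`. -/
theorem schur_jabotinsky (K : Type*) [Field K] [CharZero K] (f g : PowerSeries K)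
    (hf0 : constantCoeff f = 0) (hf1 : coeff 1 f ≠ 0)
    (hg0 : constantCoeff g = 0)
    (hgf : psComp g f = X) (hfg : psComp f g = X)
    (k n : ℤ) (hn : n ≠ 0) :
    (n : K) * (((f : LaurentSeries K)) ^ k).coeff n =
      (k : K) * (((g : LaurentSeries K)) ^ (-n)).coeff (-k) := by
  classical
  set u : PowerSeries K := PowerSeries.mk (fun i => coeff (i+1) f) with hu_def
  have hfu : f = X * u := by
    ext i
    cases i with
    | zero =>
      rw [coeff_zero_X_mul, PowerSeries.coeff_zero_eq_constantCoeff, hf0]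
    | succ i => rw [coeff_succ_X_mul, hu_def, coeff_mk]
  set v : PowerSeries K := PowerSeries.mk (fun i => coeff (i+1) g) with hv_def
  have hgv : g = X * v := by
    ext i
    cases i with
    | zero =>
      rw [coeff_zero_X_mul, PowerSeries.coeff_zero_eq_constantCoeff, hg0]
    | succ i => rw [coeff_succ_X_mul, hv_def, coeff_mk]
  have hg1 : coeff 1 f * coeff 1 g = 1 := by
    have h := congrArg (coeff 1) hfg
    rw [coeff_psComp, Finset.sum_range_succ, Finset.sum_range_succ, Finset.sum_range_zero,
      coeff_one_X] at h
    simpa [hf0, PowerSeries.coeff_zero_eq_constantCoeff] using h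
  have hgone : coeff 1 g ≠ 0 := by
    intro h0
    rw [h0, mul_zero] at hg1
    exact zero_ne_one hg1
  have hu : IsUnit u := by
    rw [PowerSeries.isUnit_iff_constantCoeff]
    apply isUnit_iff_ne_zero.mpr
    rw [← PowerSeries.coeff_zero_eq_constantCoeff, hu_def, coeff_mk]
    exact hf1
  have hv : IsUnit v := by
    rw [PowerSeries.isUnit_iff_constantCoeff]
    apply isUnit_iff_ne_zero.mpr
    rw [← PowerSeries.coeff_zero_eq_constantCoeff, hv_def, coeff_mk]
    exact hgone
  obtain ⟨U, hU⟩ := hu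
  obtain ⟨V, hV⟩ := hv
  have hmul : (X * u) * psCompHom (U:K⟦X⟧) v = X := by
    calc (X * u) * psCompHom (U:K⟦X⟧) v
        = psCompHom (U:K⟦X⟧) X * psCompHom (U:K⟦X⟧) v := by rw [psCompHom_X, hU]
      _ = psCompHom (U:K⟦X⟧) (X * v) := (map_mul _ _ _).symm
      _ = psCompHom (U:K⟦X⟧) g := by rw [← hgv]
      _ = X := by rw [psCompHom_apply, hU, ← hfu]; exact hgf
  have hcancel : u * psCompHom (U:K⟦X⟧) v = 1 := by
    apply mul_left_cancel₀ (PowerSeries.X_ne_zero (R := K))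
    rw [mul_one, ← mul_assoc]
    exact hmul
  rw [← hU] at hcancel
  have hVU : psCompHom (U:K⟦X⟧) (V:K⟦X⟧) = ((U⁻¹ : K⟦X⟧ˣ) : K⟦X⟧) := by
    rw [hV]
    calc psCompHom (U:K⟦X⟧) v
        = ((U⁻¹:K⟦X⟧ˣ):K⟦X⟧) * ((U:K⟦X⟧) * psCompHom (U:K⟦X⟧) v) := by
          rw [← mul_assoc, ← Units.val_mul, inv_mul_cancel, Units.val_one, one_mul]
      _ = ((U⁻¹:K⟦X⟧ˣ):K⟦X⟧) := by rw [hcancel, mul_one]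
  have hkey := key_of U V hVU
  rw [hfu, hgv, ← hU, ← hV, coeff_coe_zpow U k n, coeff_coe_zpow V (-n) (-k),
    show -k - -n = n - k by ring]
  by_cases hcase : 0 ≤ n - k
  · rw [if_pos hcase, if_pos hcase]
    obtain ⟨m, hm⟩ : ∃ m : ℕ, (n - k).toNat = m := ⟨_, rfl⟩
    rw [hm]
    have hnm : n = k + m := by omega
    rw [main_lemma U V hkey k n m hnm]
    have hb : (k:K) * coeff m (X * (((U^(k-1) : K⟦X⟧ˣ) : K⟦X⟧) * d⁄dX K (U:K⟦X⟧)))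
        = (m:K) * coeff m ((U^k : K⟦X⟧ˣ) : K⟦X⟧) := by
      have h1 : C ((k:ℤ):K) * (X * (((U^(k-1):K⟦X⟧ˣ):K⟦X⟧) * d⁄dX K (U:K⟦X⟧)))
          = X * d⁄dX K ((U^k:K⟦X⟧ˣ):K⟦X⟧) := by
        rw [SJ.deriv_zpow]; ring
      have h2 := congrArg (coeff m) h1
      rw [coeff_C_mul] at h2
      cases m with
      | zero =>
        rw [coeff_zero_X_mul]
        norm_num
      | succ s =>
        rw [coeff_succ_X_mul, coeff_succ_X_mul, coeff_derivative] at h2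
        rw [coeff_succ_X_mul, h2]
        push_cast
        ring
    have hcast : (n:K) = (k:K) + (m:K) := by exact_mod_cast congrArg (fun z : ℤ => (z : K)) hnm
    linear_combination (coeff m ((U^k : K⟦X⟧ˣ) : K⟦X⟧)) * hcast - hb
  · rw [if_neg hcase, if_neg hcase, mul_zero, mul_zero]
end

section
/- (Jacobi's change of variables formula for residues.) Let K be a field of characteristic zero, let f(x) be a formal Laurent series over K, and let g(x) = g₁x + g₂x² + ⋯ be a formal power series with zero constant term and g₁ ≠ 0. Then res f(x) = res ( f(g(x))·g'(x) ), where f(g(x)) denotes the formal Laurent series obtained by substituting g into f (well-defined since g has order 1), g' is the formal derivative of g, and the residue res h of a Laurent series h is its coefficient of x^{−1}. -/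
open PowerSeries

private lemma aux_ps (K : Type*) [Field K] [CharZero K] (u : PowerSeries K)
    (hu : constantCoeff (R := K) u ≠ 0) (m : ℕ) :
    coeff (R := K) m ((u⁻¹) ^ (m + 1) * d⁄dX K (X * u)) = if m = 0 then 1 else 0 := by
  set v := (u⁻¹ : PowerSeries K) with hv
  have huv : u * v = 1 := PowerSeries.mul_inv_cancel u hu
  have hder : d⁄dX K (X * u) = u + X * d⁄dX K u := by
    rw [Derivation.leibniz, derivative_X, smul_eq_mul, smul_eq_mul]
    ring
  have hvu : v ^ (m + 1) * u = v ^ m := by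
    rw [pow_succ, mul_assoc, mul_comm v u, huv, mul_one]
  have h1 : v ^ (m + 1) * d⁄dX K (X * u) = v ^ m + X * (v ^ (m + 1) * d⁄dX K u) := by
    rw [hder]
    calc v ^ (m+1) * (u + X * d⁄dX K u)
        = v ^ (m+1) * u + X * (v ^ (m+1) * d⁄dX K u) := by ring
      _ = v ^ m + X * (v ^ (m+1) * d⁄dX K u) := by rw [hvu]
  rw [h1, map_add]
  rcases Nat.eq_zero_or_pos m with hm | hm
  · subst hm
    simp
  · rw [if_neg hm.ne']
    obtain ⟨k, rfl⟩ := Nat.exists_eq_add_of_lt hm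
    rw [zero_add] at *
    rw [coeff_succ_X_mul]
    have hdv : d⁄dX K v = -v ^ 2 * d⁄dX K u := derivative_inv' u
    have hdvm : d⁄dX K (v ^ (k + 1)) = -(C (R := K) ((k : K) + 1) * (v ^ (k + 2) * d⁄dX K u)) := by
      rw [Derivation.leibniz_pow, hdv, Nat.add_sub_cancel]
      simp only [smul_eq_mul, nsmul_eq_mul, ← map_natCast (C (R := K)) (k + 1), Nat.cast_add,
        Nat.cast_one, map_add, map_one]
      ring
    have hc := congrArg (coeff (R := K) k) hdvm
    rw [coeff_derivative, map_neg, coeff_C_mul] at hc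
    have hk : ((k : K) + 1) ≠ 0 := Nat.cast_add_one_ne_zero k
    have : coeff (R := K) k (v ^ (k + 1 + 1) * d⁄dX K u) = -(coeff (R := K) (k + 1) (v ^ (k + 1))) := by
      apply mul_left_cancel₀ hk
      linear_combination hc
    rw [this]
    ring

private lemma aux_res (K : Type*) [Field K] [CharZero K] (g : PowerSeries K)
    (hg0 : constantCoeff (R := K) g = 0) (hg1 : coeff (R := K) 1 g ≠ 0) (n : ℤ) :
    (((g : LaurentSeries K) ^ n) * ((d⁄dX K g : PowerSeries K) : LaurentSeries K)).coeff (-1)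
      = if n = -1 then 1 else 0 := by
  obtain ⟨u, hu⟩ := X_dvd_iff.mpr hg0
  have hu0 : constantCoeff (R := K) u ≠ 0 := by
    intro h
    apply hg1
    rw [hu]
    rw [show (1 : ℕ) = 0 + 1 from rfl, coeff_succ_X_mul, coeff_zero_eq_constantCoeff, h]
  have huv : u * u⁻¹ = 1 := PowerSeries.mul_inv_cancel u hu0
  cases n with
  | ofNat k =>
    rw [Int.ofNat_eq_coe, zpow_natCast, ← PowerSeries.coe_pow, ← PowerSeries.coe_mul,
      PowerSeries.coeff_coe]
    rw [if_pos (by norm_num), if_neg (by omega)]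
  | negSucc m =>
    have hXne : (HahnSeries.single (1 : ℤ) (1 : K)) ≠ 0 := HahnSeries.single_ne_zero one_ne_zero
    have hgLS : (g : LaurentSeries K) = HahnSeries.single (1 : ℤ) 1 * (u : LaurentSeries K) := by
      rw [hu, PowerSeries.coe_mul, PowerSeries.coe_X]
    have hvpow : ((u : LaurentSeries K) ^ (m + 1))⁻¹
        = ((u⁻¹ ^ (m + 1) : PowerSeries K) : LaurentSeries K) := by
      apply inv_eq_of_mul_eq_one_right
      rw [← PowerSeries.coe_pow, ← PowerSeries.coe_mul, ← mul_pow, huv, one_pow,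
        PowerSeries.coe_one]
    have hXzpow : (HahnSeries.single (1 : ℤ) (1 : K)) ^ (Int.negSucc m)
        * HahnSeries.single ((m + 1 : ℕ) : ℤ) (1 : K) = 1 := by
      rw [RatFunc.single_zpow ((m + 1 : ℕ) : ℤ), ← zpow_add₀ hXne,
        show Int.negSucc m + ((m + 1 : ℕ) : ℤ) = 0 from by rw [Int.negSucc_eq]; push_cast; ring,
        zpow_zero]
    have key : (((g : LaurentSeries K) ^ (Int.negSucc m))
          * ((d⁄dX K g : PowerSeries K) : LaurentSeries K))
          * HahnSeries.single ((m + 1 : ℕ) : ℤ) (1 : K)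
        = ((u⁻¹ ^ (m + 1) * d⁄dX K g : PowerSeries K) : LaurentSeries K) := by
      rw [hgLS, mul_zpow, zpow_negSucc ((u : LaurentSeries K)), hvpow]
      rw [PowerSeries.coe_mul]
      rw [show ∀ a b c d : LaurentSeries K, a * b * c * d = (a * d) * (b * c)
        from fun a b c d => by ring, hXzpow, one_mul]
    have hcoeff := congrArg (fun h : LaurentSeries K => h.coeff ((-1) + ((m + 1 : ℕ) : ℤ))) key
    simp only [HahnSeries.coeff_mul_single_add, mul_one] at hcoeff
    rw [hcoeff, show ((-1) + ((m + 1 : ℕ) : ℤ)) = ((m : ℕ) : ℤ) from by push_cast; ring,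
      PowerSeries.coeff_coe]
    rw [if_neg (by omega), Int.natAbs_natCast, hu, aux_ps K u hu0 m]
    by_cases hm : m = 0
    · subst hm
      rw [if_pos rfl, if_pos (by decide)]
    · rw [if_neg hm, if_neg (by rw [Int.negSucc_eq]; omega)]

/-- Jacobi's change of variables formula for residues: if `f` is a formal Laurent
series and `g = g₁x + g₂x² + ⋯` is a power series with zero constant term and
`g₁ ≠ 0`, then `res f = res (f(g)·g')`.  Here the substitution `f(g)` is, by
definition (and by linearity), `∑ₙ fₙ gⁿ` (integer powers `gⁿ` taken in the field
of Laurent series), so `res (f(g)·g') = ∑ₙ fₙ · res (gⁿ·g')`; this sum has only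
finitely many nonzero terms, since `res (gⁿ·g') = 0` for `n ≥ 0` and the support of
`f` is bounded below.  It is therefore rendered as a `finsum` over `n : ℤ`. -/
theorem jacobi_residue_change_of_variables (K : Type*) [Field K] [CharZero K]
    (f : LaurentSeries K) (g : PowerSeries K)
    (hg0 : constantCoeff (R := K) g = 0) (hg1 : coeff (R := K) 1 g ≠ 0) :
    f.coeff (-1) =
      ∑ᶠ n : ℤ, f.coeff n *
        (((g : LaurentSeries K) ^ n) * ((d⁄dX K g : PowerSeries K) : LaurentSeries K)).coeff
          (-1) := by
  have hsum : (∑ᶠ n : ℤ, f.coeff n *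
      (((g : LaurentSeries K) ^ n) * ((d⁄dX K g : PowerSeries K) : LaurentSeries K)).coeff (-1))
      = ∑ᶠ n : ℤ, f.coeff n * (if n = -1 then 1 else 0) := by
    apply finsum_congr
    intro n
    rw [aux_res K g hg0 hg1 n]
  rw [hsum, finsum_eq_single _ (-1 : ℤ) (fun n hn => by rw [if_neg hn, mul_zero])]
  simp
end

section
/- Let C be a commutative ring containing the rational numbers, let H(x) and φ(x) be formal power series over C, and let f be the unique formal power series in z over C[[x]] satisfying f = x + z·H(f). Then [z^0] φ(f) = φ(x), and for every integer m ≥ 1, [z^m] φ(f) = (1/m!)·D^{m−1}( φ'(x)·H(x)^m ), where D = d/dx is the formal derivative with respect to x, φ' = Dφ, and [z^m] denotes the coefficient of z^m (an element of C[[x]]). -/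
open PowerSeries

/-- Substitution `φ(f)` of an element `f` of `A⟦x⟧⟦z⟧` into a power series
`φ ∈ A⟦x⟧`.  The truncation in the sum is correct (i.e. this agrees with
`∑ₙ φₙ fⁿ`) whenever every monomial `x^a z^m` occurring in `f` has `a + m ≥ 1`,
which holds for the solution of `f = x + z·H(f)`: then the coefficient of
`x^a z^m` in `fⁿ` vanishes for `n > a + m`. -/
noncomputable def psCompXZ {A : Type*} [CommRing A] (φ : PowerSeries A)
    (f : PowerSeries (PowerSeries A)) : PowerSeries (PowerSeries A) :=
  PowerSeries.mk fun m => PowerSeries.mk fun a =>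
    ∑ n ∈ Finset.range (a + m + 1),
      coeff (R := A) n φ * coeff (R := A) a (coeff (R := PowerSeries A) m (f ^ n))

namespace LagAux

variable {A : Type*} [CommRing A]

/-- All coefficients of total degree `< N` vanish. -/
def LZ (N : ℕ) (g : PowerSeries (PowerSeries A)) : Prop :=
  ∀ a m : ℕ, a + m < N → coeff (R := A) a (coeff (R := PowerSeries A) m g) = 0

lemma LZ.sub {N : ℕ} {g h : PowerSeries (PowerSeries A)} (hg : LZ N g) (hh : LZ N h) :
    LZ N (g - h) := by
  intro a m ham
  simp [map_sub, hg a m ham, hh a m ham]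

lemma LZ.add {N : ℕ} {g h : PowerSeries (PowerSeries A)} (hg : LZ N g) (hh : LZ N h) :
    LZ N (g + h) := by
  intro a m ham
  simp [map_add, hg a m ham, hh a m ham]

lemma LZ.neg {N : ℕ} {g : PowerSeries (PowerSeries A)} (hg : LZ N g) : LZ N (-g) := by
  intro a m ham
  simp [hg a m ham]

lemma LZ.mul_left {N : ℕ} {g : PowerSeries (PowerSeries A)} (hg : LZ N g)
    (h : PowerSeries (PowerSeries A)) : LZ N (h * g) := by
  intro a m ham
  rw [PowerSeries.coeff_mul, map_sum]
  refine Finset.sum_eq_zero fun p hp => ?_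
  rw [PowerSeries.coeff_mul]
  refine Finset.sum_eq_zero fun q hq => ?_
  rw [Finset.HasAntidiagonal.mem_antidiagonal] at hp hq
  rw [hg q.2 p.2 (by omega), mul_zero]

lemma LZ.mul_right {N : ℕ} {g : PowerSeries (PowerSeries A)} (hg : LZ N g)
    (h : PowerSeries (PowerSeries A)) : LZ N (g * h) := by
  rw [mul_comm]; exact hg.mul_left h

lemma LZ.pow {f : PowerSeries (PowerSeries A)} (h1 : LZ 1 f) : ∀ n, LZ n (f ^ n) := by
  intro n
  induction n with
  | zero => intro a m ham; omega
  | succ n ih =>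
    intro a m ham
    rw [pow_succ, mul_comm, PowerSeries.coeff_mul, map_sum]
    refine Finset.sum_eq_zero fun p hp => ?_
    rw [PowerSeries.coeff_mul]
    refine Finset.sum_eq_zero fun q hq => ?_
    rw [Finset.HasAntidiagonal.mem_antidiagonal] at hp hq
    rcases Nat.eq_zero_or_pos (q.1 + p.1) with h0 | h0
    · rw [h1 q.1 p.1 (by omega), zero_mul]
    · rw [ih q.2 p.2 (by omega), mul_zero]

/-- Equality from `LZ` of the difference at every level. -/
lemma eq_of_lz {g h : PowerSeries (PowerSeries A)}
    (hd : ∀ N, LZ N (g - h)) : g = h := by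
  ext m a
  have := hd (a + m + 1) a m (by omega)
  rwa [map_sub, map_sub, sub_eq_zero] at this

lemma ddx_eq (R : Type*) [CommRing R] (g : PowerSeries R) :
    d⁄dX R g = g.derivativeFun := rfl

lemma dz_mul {R : Type*} [CommRing R] (g h : PowerSeries R) :
    d⁄dX R (g * h) = g * d⁄dX R h + h * d⁄dX R g := by
  rw [ddx_eq, ddx_eq, ddx_eq, PowerSeries.derivativeFun_mul, smul_eq_mul, smul_eq_mul]

lemma dz_pow_succ {R : Type*} [CommRing R] (g : PowerSeries R) (n : ℕ) :
    d⁄dX R (g ^ (n + 1)) = (n + 1) • (g ^ n * d⁄dX R g) := by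
  induction n with
  | zero => simp
  | succ n ih =>
    rw [pow_succ', dz_mul, ih, mul_smul_comm, ← mul_assoc, ← pow_succ',
      succ_nsmul ((g ^ (n + 1)) * d⁄dX R g) (n + 1)]

/-- Truncated composition as an honest finite sum. -/
noncomputable def truncComp (φ : PowerSeries A) (f : PowerSeries (PowerSeries A)) (N : ℕ) :
    PowerSeries (PowerSeries A) :=
  ∑ n ∈ Finset.range N, PowerSeries.C (R := PowerSeries A) (PowerSeries.C (R := A) (coeff (R := A) n φ)) * f ^ n

lemma coeff_truncComp (φ : PowerSeries A) (f : PowerSeries (PowerSeries A)) (N a m : ℕ) :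
    coeff (R := A) a (coeff (R := PowerSeries A) m (truncComp φ f N)) =
      ∑ n ∈ Finset.range N, coeff (R := A) n φ * coeff (R := A) a (coeff (R := PowerSeries A) m (f ^ n)) := by
  rw [truncComp, map_sum, map_sum]
  refine Finset.sum_congr rfl fun n _ => ?_
  rw [coeff_C_mul, coeff_C_mul]

lemma coeff_psCompXZ (φ : PowerSeries A) (f : PowerSeries (PowerSeries A)) (a m : ℕ) :
    coeff (R := A) a (coeff (R := PowerSeries A) m (psCompXZ φ f)) =
      ∑ n ∈ Finset.range (a + m + 1),
        coeff (R := A) n φ * coeff (R := A) a (coeff (R := PowerSeries A) m (f ^ n)) := by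
  simp [psCompXZ]

variable {f : PowerSeries (PowerSeries A)} (h1 : LZ 1 f)

include h1 in
lemma psComp_coeff_trunc (φ : PowerSeries A) {N a m : ℕ} (h : a + m < N) :
    coeff (R := A) a (coeff (R := PowerSeries A) m (psCompXZ φ f)) =
      coeff (R := A) a (coeff (R := PowerSeries A) m (truncComp φ f N)) := by
  rw [coeff_psCompXZ, coeff_truncComp]
  refine Finset.sum_subset (Finset.range_subset_range.2 (by omega)) fun n hn hn' => ?_
  rw [Finset.mem_range] at hn hn'
  rw [LZ.pow h1 n a m (by omega), mul_zero]

include h1 in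
lemma lz_psComp_sub_trunc (φ : PowerSeries A) (N : ℕ) :
    LZ N (psCompXZ φ f - truncComp φ f N) := by
  intro a m ham
  rw [map_sub, map_sub, psComp_coeff_trunc h1 φ ham, sub_self]

/-- Sum over antidiagonals of `range N` equals the sum over the square, provided terms
with index-sum `≥ N` vanish. -/
lemma sum_antidiag_square {M : Type*} [AddCommMonoid M] (t : ℕ → ℕ → M) (N : ℕ)
    (ht : ∀ p q, N ≤ p + q → t p q = 0) :
    ∑ n ∈ Finset.range N, ∑ pq ∈ Finset.HasAntidiagonal.antidiagonal n, t pq.1 pq.2 =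
      ∑ p ∈ Finset.range N, ∑ q ∈ Finset.range N, t p q := by
  rw [← Finset.sum_biUnion (by
    intro i _ j _ hij
    simp only [Function.onFun]
    rw [Finset.disjoint_left]
    intro pq hpi hpj
    rw [Finset.HasAntidiagonal.mem_antidiagonal] at hpi hpj
    exact hij (hpi ▸ hpj ▸ rfl))]
  rw [← Finset.sum_product']
  refine Finset.sum_subset ?_ ?_
  · intro pq hpq
    rw [Finset.mem_biUnion] at hpq
    obtain ⟨n, hn, hpq⟩ := hpq
    rw [Finset.HasAntidiagonal.mem_antidiagonal] at hpq
    rw [Finset.mem_range] at hn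
    simp only [Finset.mem_product, Finset.mem_range]
    omega
  · intro pq hpq hnb
    refine ht pq.1 pq.2 ?_
    by_contra hlt
    exact hnb (Finset.mem_biUnion.2 ⟨pq.1 + pq.2, Finset.mem_range.2 (by omega),
      Finset.HasAntidiagonal.mem_antidiagonal.2 rfl⟩)

include h1 in
lemma comp_mul (φ χ : PowerSeries A) :
    psCompXZ (φ * χ) f = psCompXZ φ f * psCompXZ χ f := by
  have key : ∀ N, LZ N (truncComp (φ * χ) f N - truncComp φ f N * truncComp χ f N) := by
    intro N a m ham
    have htr : truncComp φ f N * truncComp χ f N =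
        ∑ p ∈ Finset.range N, ∑ q ∈ Finset.range N,
          PowerSeries.C (R := PowerSeries A) (PowerSeries.C (R := A) (coeff (R := A) p φ * coeff (R := A) q χ)) *
            f ^ (p + q) := by
      rw [truncComp, truncComp, Finset.sum_mul_sum]
      refine Finset.sum_congr rfl fun p _ => Finset.sum_congr rfl fun q _ => ?_
      rw [mul_mul_mul_comm, ← map_mul, ← map_mul, ← pow_add]
    have htl : truncComp (φ * χ) f N =
        ∑ n ∈ Finset.range N, ∑ pq ∈ Finset.HasAntidiagonal.antidiagonal n,
          PowerSeries.C (R := PowerSeries A) (PowerSeries.C (R := A) (coeff (R := A) pq.1 φ * coeff (R := A) pq.2 χ)) *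
            f ^ (pq.1 + pq.2) := by
      rw [truncComp]
      refine Finset.sum_congr rfl fun n hn => ?_
      rw [PowerSeries.coeff_mul, map_sum, map_sum, Finset.sum_mul]
      refine Finset.sum_congr rfl fun pq hpq => ?_
      rw [Finset.HasAntidiagonal.mem_antidiagonal] at hpq
      rw [hpq]
    rw [map_sub, map_sub, htr, htl, sub_eq_zero]
    have := sum_antidiag_square
      (fun p q => coeff (R := A) a (coeff (R := PowerSeries A) m
        (PowerSeries.C (R := PowerSeries A) (PowerSeries.C (R := A) (coeff (R := A) p φ * coeff (R := A) q χ)) *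
          f ^ (p + q)))) N ?_
    · simpa only [map_sum] using this
    · intro p q hpq
      rw [coeff_C_mul, coeff_C_mul, LZ.pow h1 (p + q) a m (by omega), mul_zero]
  apply eq_of_lz
  intro N
  have e1 := lz_psComp_sub_trunc h1 (φ * χ) N
  have e2 := lz_psComp_sub_trunc h1 φ N
  have e3 := lz_psComp_sub_trunc h1 χ N
  have hsplit : psCompXZ (φ * χ) f - psCompXZ φ f * psCompXZ χ f =
      (psCompXZ (φ * χ) f - truncComp (φ * χ) f N) +
        (truncComp (φ * χ) f N - truncComp φ f N * truncComp χ f N) +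
        (truncComp φ f N * -(psCompXZ χ f - truncComp χ f N) +
          -(psCompXZ φ f - truncComp φ f N) * psCompXZ χ f) := by
    ring
  rw [hsplit]
  exact ((e1.add (key N)).add ((e3.neg.mul_left _).add (e2.neg.mul_right _)))

/-! ### The derivative in the inner variable `x` -/

/-- Coefficientwise derivative with respect to the inner variable. -/
noncomputable def Dx (g : PowerSeries (PowerSeries A)) : PowerSeries (PowerSeries A) :=
  PowerSeries.mk fun m => d⁄dX A (coeff (R := PowerSeries A) m g)

@[simp] lemma coeff_Dx (m : ℕ) (g : PowerSeries (PowerSeries A)) :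
    coeff (R := PowerSeries A) m (Dx g) = d⁄dX A (coeff (R := PowerSeries A) m g) :=
  coeff_mk m _

lemma Dx_add (g h : PowerSeries (PowerSeries A)) : Dx (g + h) = Dx g + Dx h := by
  ext m
  simp [map_add]

lemma Dx_sum {ι : Type*} (s : Finset ι) (g : ι → PowerSeries (PowerSeries A)) :
    Dx (∑ i ∈ s, g i) = ∑ i ∈ s, Dx (g i) := by
  apply PowerSeries.ext; intro m
  simp only [coeff_Dx, map_sum]

lemma Dx_mul (g h : PowerSeries (PowerSeries A)) : Dx (g * h) = Dx g * h + g * Dx h := by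
  apply PowerSeries.ext; intro m
  rw [coeff_Dx, map_add, PowerSeries.coeff_mul, PowerSeries.coeff_mul, PowerSeries.coeff_mul,
    map_sum, ← Finset.sum_add_distrib]
  refine Finset.sum_congr rfl fun p hp => ?_
  rw [coeff_Dx, coeff_Dx, Derivation.leibniz, smul_eq_mul, smul_eq_mul]
  ring

lemma Dx_C (w : PowerSeries A) :
    Dx (PowerSeries.C (R := PowerSeries A) w) = PowerSeries.C (R := PowerSeries A) (d⁄dX A w) := by
  ext m
  rw [coeff_Dx, PowerSeries.coeff_C, PowerSeries.coeff_C]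
  split_ifs <;> simp

lemma Dx_one : Dx (1 : PowerSeries (PowerSeries A)) = 0 := by
  have := Dx_C (1 : PowerSeries A)
  simpa using this

lemma Dx_pow_succ (g : PowerSeries (PowerSeries A)) (n : ℕ) :
    Dx (g ^ (n + 1)) = (n + 1) • (g ^ n * Dx g) := by
  induction n with
  | zero => simp
  | succ n ih =>
    rw [pow_succ', Dx_mul, ih, mul_smul_comm, ← mul_assoc, ← pow_succ',
      succ_nsmul ((g ^ (n + 1)) * Dx g) (n + 1), mul_comm (Dx g), add_comm]

lemma Dx_CX : Dx (PowerSeries.C (R := PowerSeries A) PowerSeries.X) = 1 := by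
  rw [Dx_C, PowerSeries.derivative_X, map_one]

/-! ### `LZ` and derivatives -/

lemma LZ.dz {N : ℕ} {g : PowerSeries (PowerSeries A)} (h : LZ (N + 1) g) :
    LZ N (d⁄dX (PowerSeries A) g) := by
  intro a m ham
  have hc : ((m : PowerSeries A) + 1) = PowerSeries.C (R := A) ((m : A) + 1) := by
    rw [map_add, map_natCast, map_one]
  rw [PowerSeries.coeff_derivative, mul_comm, hc, coeff_C_mul,
    h a (m + 1) (by omega), mul_zero]

lemma LZ.dx {N : ℕ} {g : PowerSeries (PowerSeries A)} (h : LZ (N + 1) g) :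
    LZ N (Dx g) := by
  intro a m ham
  rw [coeff_Dx, PowerSeries.coeff_derivative, h (a + 1) m (by omega), zero_mul]

/-! ### Chain rules -/

include h1 in
lemma comp_dz (φ : PowerSeries A) :
    d⁄dX (PowerSeries A) (psCompXZ φ f) =
      psCompXZ (d⁄dX A φ) f * d⁄dX (PowerSeries A) f := by
  apply eq_of_lz
  intro N
  have e1 : LZ N (d⁄dX (PowerSeries A) (psCompXZ φ f) -
      d⁄dX (PowerSeries A) (truncComp φ f (N + 1))) := by
    have := (lz_psComp_sub_trunc h1 φ (N + 1)).dz
    rwa [map_sub] at this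
  have e2 : d⁄dX (PowerSeries A) (truncComp φ f (N + 1)) =
      truncComp (d⁄dX A φ) f N * d⁄dX (PowerSeries A) f := by
    rw [truncComp, map_sum, Finset.sum_range_succ', truncComp, Finset.sum_mul]
    have hlast : d⁄dX (PowerSeries A)
        (PowerSeries.C (R := PowerSeries A) (PowerSeries.C (R := A) (coeff (R := A) 0 φ)) * f ^ 0) = 0 := by
      rw [pow_zero, mul_one, PowerSeries.derivative_C]
    rw [hlast, add_zero]
    refine Finset.sum_congr rfl fun p _ => ?_
    rw [dz_mul, PowerSeries.derivative_C, mul_zero, add_zero, dz_pow_succ,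
      PowerSeries.coeff_derivative]
    have hc : (PowerSeries.C (R := PowerSeries A))
        ((PowerSeries.C (R := A)) (coeff (R := A) (p + 1) φ * ((p : A) + 1))) =
        (PowerSeries.C (R := PowerSeries A)) ((PowerSeries.C (R := A)) (coeff (R := A) (p + 1) φ)) *
          ((p + 1 : ℕ) : PowerSeries (PowerSeries A)) := by
      rw [map_mul, map_mul]
      congr 1
      push_cast
      rw [map_add, map_add, map_natCast, map_natCast, map_one, map_one]
    rw [hc, nsmul_eq_mul]
    ring
  have e3 : LZ N (truncComp (d⁄dX A φ) f N * d⁄dX (PowerSeries A) f -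
      psCompXZ (d⁄dX A φ) f * d⁄dX (PowerSeries A) f) := by
    have := ((lz_psComp_sub_trunc h1 (d⁄dX A φ) N).neg).mul_right (d⁄dX (PowerSeries A) f)
    simpa [sub_mul, neg_mul, neg_sub] using this
  have hsplit : d⁄dX (PowerSeries A) (psCompXZ φ f) -
      psCompXZ (d⁄dX A φ) f * d⁄dX (PowerSeries A) f =
      (d⁄dX (PowerSeries A) (psCompXZ φ f) - d⁄dX (PowerSeries A) (truncComp φ f (N + 1))) +
        (truncComp (d⁄dX A φ) f N * d⁄dX (PowerSeries A) f -
          psCompXZ (d⁄dX A φ) f * d⁄dX (PowerSeries A) f) := by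
    rw [e2]; ring
  rw [hsplit]
  exact e1.add e3

include h1 in
lemma comp_dx (φ : PowerSeries A) :
    Dx (psCompXZ φ f) = psCompXZ (d⁄dX A φ) f * Dx f := by
  apply eq_of_lz
  intro N
  have e1 : LZ N (Dx (psCompXZ φ f) - Dx (truncComp φ f (N + 1))) := by
    have := (lz_psComp_sub_trunc h1 φ (N + 1)).dx
    rwa [show Dx (psCompXZ φ f - truncComp φ f (N + 1)) =
      Dx (psCompXZ φ f) - Dx (truncComp φ f (N + 1)) by
        rw [sub_eq_add_neg, sub_eq_add_neg, Dx_add]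
        congr 1
        ext m; simp] at this
  have e2 : Dx (truncComp φ f (N + 1)) = truncComp (d⁄dX A φ) f N * Dx f := by
    rw [truncComp, Dx_sum, Finset.sum_range_succ', truncComp, Finset.sum_mul]
    have hlast : Dx (PowerSeries.C (R := PowerSeries A) (PowerSeries.C (R := A) (coeff (R := A) 0 φ)) * f ^ 0) = 0 := by
      rw [pow_zero, mul_one, Dx_C, PowerSeries.derivative_C, map_zero]
    rw [hlast, add_zero]
    refine Finset.sum_congr rfl fun p _ => ?_
    rw [Dx_mul, Dx_C, PowerSeries.derivative_C, map_zero, zero_mul, zero_add, Dx_pow_succ,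
      PowerSeries.coeff_derivative]
    have hc : (PowerSeries.C (R := PowerSeries A))
        ((PowerSeries.C (R := A)) (coeff (R := A) (p + 1) φ * ((p : A) + 1))) =
        (PowerSeries.C (R := PowerSeries A)) ((PowerSeries.C (R := A)) (coeff (R := A) (p + 1) φ)) *
          ((p + 1 : ℕ) : PowerSeries (PowerSeries A)) := by
      rw [map_mul, map_mul]
      congr 1
      push_cast
      rw [map_add, map_add, map_natCast, map_natCast, map_one, map_one]
    rw [hc, nsmul_eq_mul]
    ring
  have e3 : LZ N (truncComp (d⁄dX A φ) f N * Dx f - psCompXZ (d⁄dX A φ) f * Dx f) := by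
    have := ((lz_psComp_sub_trunc h1 (d⁄dX A φ) N).neg).mul_right (Dx f)
    simpa [sub_mul, neg_mul, neg_sub] using this
  have hsplit : Dx (psCompXZ φ f) - psCompXZ (d⁄dX A φ) f * Dx f =
      (Dx (psCompXZ φ f) - Dx (truncComp φ f (N + 1))) +
        (truncComp (d⁄dX A φ) f N * Dx f - psCompXZ (d⁄dX A φ) f * Dx f) := by
    rw [e2]; ring
  rw [hsplit]
  exact e1.add e3

section WithEquation

variable (H : PowerSeries A) {f : PowerSeries (PowerSeries A)}
variable (hf : f = PowerSeries.C (R := PowerSeries A) PowerSeries.X + PowerSeries.X * psCompXZ H f)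

lemma Dx_X : Dx (PowerSeries.X : PowerSeries (PowerSeries A)) = 0 := by
  apply PowerSeries.ext; intro m
  rw [coeff_Dx, PowerSeries.coeff_X, map_zero]
  split_ifs
  · rw [← map_one (PowerSeries.C (R := A)), PowerSeries.derivative_C]
  · rw [map_zero]

include hf in
lemma lz_one_of_hf : LZ 1 f := by
  intro a m ham
  obtain ⟨rfl, rfl⟩ : a = 0 ∧ m = 0 := by omega
  rw [hf, map_add, map_add]
  simp [PowerSeries.coeff_zero_eq_constantCoeff_apply]

include hf in
lemma constCoeff_of_hf : coeff (R := PowerSeries A) 0 f = PowerSeries.X := by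
  conv_lhs => rw [hf]
  rw [map_add]
  have h2 : coeff (R := PowerSeries A) 0 (PowerSeries.X * psCompXZ H f) = 0 := by
    rw [PowerSeries.coeff_zero_eq_constantCoeff_apply, map_mul, PowerSeries.constantCoeff_X,
      zero_mul]
  rw [h2, add_zero]
  simp

include hf in
lemma comp_coeff_zero (φ : PowerSeries A) : coeff (R := PowerSeries A) 0 (psCompXZ φ f) = φ := by
  have hc := constCoeff_of_hf H hf
  ext a
  rw [coeff_psCompXZ]
  have hX : ∀ n : ℕ, coeff (R := PowerSeries A) 0 (f ^ n) = PowerSeries.X ^ n := by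
    intro n
    rw [PowerSeries.coeff_zero_eq_constantCoeff_apply, map_pow,
      ← PowerSeries.coeff_zero_eq_constantCoeff_apply, hc]
  rw [Finset.sum_congr rfl fun n _ => by rw [hX n, PowerSeries.coeff_X_pow]]
  rw [Finset.sum_eq_single a (fun n _ hn => by rw [if_neg (fun h => hn h.symm), mul_zero])
    (fun ha => absurd (Finset.mem_range.2 (by omega)) ha)]
  rw [if_pos rfl, mul_one]

include hf in
lemma key_deriv (φ ψ : PowerSeries A) (hψ : d⁄dX A ψ = d⁄dX A φ * H) :
    d⁄dX (PowerSeries A) (psCompXZ φ f) = Dx (psCompXZ ψ f) := by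
  have h1 : LZ 1 f := lz_one_of_hf H hf
  set u : PowerSeries (PowerSeries A) := PowerSeries.X * psCompXZ (d⁄dX A H) f with hu
  have hDz : d⁄dX (PowerSeries A) f = psCompXZ H f + u * d⁄dX (PowerSeries A) f := by
    conv_lhs => rw [hf]
    rw [map_add, PowerSeries.derivative_C, zero_add, dz_mul, PowerSeries.derivative_X, mul_one,
      comp_dz h1 H]
    ring
  have hDx : Dx f = 1 + u * Dx f := by
    conv_lhs => rw [hf]
    rw [Dx_add, Dx_CX, Dx_mul, Dx_X, zero_mul, zero_add, comp_dx h1 H]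
    ring
  have hkey : d⁄dX (PowerSeries A) f = psCompXZ H f * Dx f := by
    have e1 : (1 - u) * d⁄dX (PowerSeries A) f = psCompXZ H f := by linear_combination hDz
    have e2 : (1 - u) * Dx f = 1 := by linear_combination hDx
    calc d⁄dX (PowerSeries A) f = d⁄dX (PowerSeries A) f * ((1 - u) * Dx f) := by
          rw [e2, mul_one]
      _ = ((1 - u) * d⁄dX (PowerSeries A) f) * Dx f := by ring
      _ = psCompXZ H f * Dx f := by rw [e1]
  rw [comp_dz h1 φ, comp_dx h1 ψ, hψ, comp_mul h1, hkey]
  ring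

section Rat

variable [Algebra ℚ A]

/-- The antiderivative with zero constant term. -/
noncomputable def anti (χ : PowerSeries A) : PowerSeries A :=
  PowerSeries.mk fun n => ((n : ℚ))⁻¹ • coeff (R := A) (n - 1) χ

lemma deriv_anti (χ : PowerSeries A) : d⁄dX A (anti χ) = χ := by
  ext n
  rw [PowerSeries.coeff_derivative, anti, coeff_mk, Nat.add_sub_cancel]
  have h2 : coeff (R := A) n χ * ((n : A) + 1) = (((n : ℚ)) + 1) • coeff (R := A) n χ := by
    rw [Algebra.smul_def, map_add, map_natCast, map_one, mul_comm]
  push_cast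
  rw [smul_mul_assoc, h2, smul_smul, inv_mul_cancel₀ (by positivity), one_smul]

lemma deriv_smul (q : ℚ) (w : PowerSeries A) : d⁄dX A (q • w) = q • d⁄dX A w := by
  ext n
  rw [PowerSeries.coeff_derivative, PowerSeries.coeff_smul, PowerSeries.coeff_smul,
    PowerSeries.coeff_derivative, smul_mul_assoc]

include hf in
lemma coeff_succ_eq (φ ψ : PowerSeries A) (hψ : d⁄dX A ψ = d⁄dX A φ * H) (m : ℕ) :
    coeff (R := PowerSeries A) (m + 1) (psCompXZ φ f) =
      (((m : ℚ)) + 1)⁻¹ • d⁄dX A (coeff (R := PowerSeries A) m (psCompXZ ψ f)) := by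
  have hk := key_deriv H hf φ ψ hψ
  have h0 := congrArg (coeff (R := PowerSeries A) m) hk
  rw [PowerSeries.coeff_derivative, coeff_Dx] at h0
  have h2 : coeff (R := PowerSeries A) (m + 1) (psCompXZ φ f) * ((m : PowerSeries A) + 1) =
      (((m : ℚ)) + 1) • coeff (R := PowerSeries A) (m + 1) (psCompXZ φ f) := by
    rw [Algebra.smul_def, map_add, map_natCast, map_one, mul_comm]
  rw [h2] at h0
  rw [← h0, smul_smul, inv_mul_cancel₀ (by positivity), one_smul]

include hf in
lemma main_formula (φ : PowerSeries A) (m : ℕ) :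
    coeff (R := PowerSeries A) (m + 1) (psCompXZ φ f) =
      (((m + 1).factorial : ℚ))⁻¹ • (fun g => d⁄dX A g)^[m] (d⁄dX A φ * H ^ (m + 1)) := by
  induction m generalizing φ with
  | zero =>
    have h0 := coeff_succ_eq H hf φ (anti (d⁄dX A φ * H)) (by rw [deriv_anti]) 0
    rw [comp_coeff_zero H hf, deriv_anti] at h0
    simpa using h0
  | succ m ih =>
    have h0 := coeff_succ_eq H hf φ (anti (d⁄dX A φ * H)) (by rw [deriv_anti]) (m + 1)
    rw [ih (anti (d⁄dX A φ * H)), deriv_anti] at h0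
    have harg : (d⁄dX A φ * H) * H ^ (m + 1) = d⁄dX A φ * H ^ (m + 2) := by
      rw [mul_assoc, ← pow_succ']
    rw [harg, deriv_smul, smul_smul] at h0
    rw [h0]
    have hit : d⁄dX A ((fun g => d⁄dX A g)^[m] (d⁄dX A φ * H ^ (m + 2))) =
        (fun g => d⁄dX A g)^[m + 1] (d⁄dX A φ * H ^ (m + 2)) := by
      rw [Function.iterate_succ_apply' (fun g => d⁄dX A g) m]
    rw [hit]
    congr 1
    rw [Nat.factorial_succ (m + 1)]
    push_cast
    rw [mul_inv]

end Rat

end WithEquation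

end LagAux

/-- Lagrange inversion in derivative form: if `f ∈ C⟦x⟧⟦z⟧` satisfies
`f = x + z·H(f)` then `[z⁰] φ(f) = φ(x)` and for `m ≥ 1`,
`[z^m] φ(f) = (1/m!)·D^{m−1}( φ'(x)·H(x)^m )` where `D = d/dx`. -/
theorem lagrange_inversion_shift_derivative_form (A : Type*) [CommRing A] [Algebra ℚ A]
    (H φ : PowerSeries A) (f : PowerSeries (PowerSeries A))
    (hf : f = PowerSeries.C (R := PowerSeries A) PowerSeries.X + PowerSeries.X * psCompXZ H f) :
    coeff (R := PowerSeries A) 0 (psCompXZ φ f) = φ ∧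
      ∀ m : ℕ, 1 ≤ m →
        coeff (R := PowerSeries A) m (psCompXZ φ f) =
          (m.factorial : ℚ)⁻¹ • (fun g => d⁄dX A g)^[m - 1] (d⁄dX A φ * H ^ m) := by
  constructor
  · exact LagAux.comp_coeff_zero H hf φ
  · intro m hm
    obtain ⟨m', rfl⟩ : ∃ m', m = m' + 1 := ⟨m - 1, by omega⟩
    simpa using LagAux.main_formula H hf φ m'
end

section
/- (Pfaff–Cauchy convolution identity.) Let C be a commutative ring containing the rational numbers and let φ(x), ψ(x), H(x) be formal power series over C. Then for every integer n ≥ 0, Σ_{m=0}^{n} C(n,m) · A_m · D^{n−m}( ψ(x)·H(x)^{n−m} ) = D^{n}( φ(x)·ψ(x)·H(x)^{n} ), where D = d/dx is the formal derivative, A_0 = φ(x), and A_m = D^{m−1}( φ'(x)·H(x)^m ) for m ≥ 1. -/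
open PowerSeries Finset

namespace PfaffCauchyAux

variable {C : Type*} [CommRing C]

noncomputable def BB (H : PowerSeries C) (k : ℕ) (c : PowerSeries C) : PowerSeries C :=
  (fun g => d⁄dX C g)^[k] (c * H ^ k)

noncomputable def AA (H : PowerSeries C) : ℕ → PowerSeries C → PowerSeries C
  | 0, φ => φ
  | (k+1), φ => BB H k (d⁄dX C φ * H)

lemma iterD_add (k : ℕ) (a b : PowerSeries C) :
    (fun g => d⁄dX C g)^[k] (a + b) =
      (fun g => d⁄dX C g)^[k] a + (fun g => d⁄dX C g)^[k] b := by
  induction k generalizing a b with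
  | zero => simp
  | succ k ih => simp only [Function.iterate_succ_apply, map_add, ih]

lemma iterD_nsmul (k n : ℕ) (a : PowerSeries C) :
    (fun g => d⁄dX C g)^[k] (n • a) = n • (fun g => d⁄dX C g)^[k] a := by
  induction k generalizing a with
  | zero => simp
  | succ k ih => simp only [Function.iterate_succ_apply, map_nsmul, ih]

lemma BB_zero (H c : PowerSeries C) : BB H 0 c = c := by simp [BB]

lemma BB_add (H : PowerSeries C) (k : ℕ) (a b : PowerSeries C) :
    BB H k (a + b) = BB H k a + BB H k b := by
  simp [BB, add_mul, iterD_add]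

lemma BB_succ (H : PowerSeries C) (k : ℕ) (c : PowerSeries C) :
    BB H (k+1) c = BB H k (d⁄dX C c * H) + (k+1) • BB H k (c * d⁄dX C H) := by
  have h1 : d⁄dX C (c * H ^ (k+1)) =
      (d⁄dX C c * H) * H ^ k + (k+1) • ((c * d⁄dX C H) * H ^ k) := by
    rw [Derivation.leibniz, Derivation.leibniz_pow]
    simp only [Nat.add_sub_cancel, smul_eq_mul, nsmul_eq_mul]
    ring
  rw [BB, Function.iterate_succ_apply]
  show (fun g => d⁄dX C g)^[k] (d⁄dX C (c * H ^ (k+1))) = _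
  rw [h1, iterD_add, iterD_nsmul]
  rfl

lemma AA_succ (H : PowerSeries C) (k : ℕ) (φ : PowerSeries C) :
    AA H (k+1) φ = BB H k (d⁄dX C φ * H) := rfl

lemma S5 (H : PowerSeries C) (m : ℕ) (c : PowerSeries C) :
    BB H m c = AA H m c + m • BB H (m-1) (c * d⁄dX C H) := by
  cases m with
  | zero => simp [BB_zero, AA]
  | succ k => simpa [AA] using BB_succ H k c


section Sums
variable {M : Type*} [AddCommMonoid M]

lemma pascal_sum (n : ℕ) (g : ℕ → M) :
    ∑ m ∈ range (n+2), (n+1).choose m • g m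
      = ∑ m ∈ range (n+1), n.choose m • g m + ∑ m ∈ range (n+1), n.choose m • g (m+1) := by
  rw [Finset.sum_range_succ' (fun m => (n+1).choose m • g m) (n+1)]
  simp only [Nat.choose_succ_succ, add_smul, Finset.sum_add_distrib, Nat.choose_zero_right,
    one_smul]
  rw [Finset.sum_range_succ (fun i => n.choose (i+1) • g (i+1)) n]
  rw [Finset.sum_range_succ' (fun m => n.choose m • g m) n]
  simp only [Nat.choose_succ_self, zero_smul, add_zero, Nat.choose_zero_right, one_smul]
  abel

lemma absorb_sum (n : ℕ) (g : ℕ → M) :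
    ∑ m ∈ range (n+1), (n.choose m * m) • g m
      = n • ∑ k ∈ range n, (n-1).choose k • g (k+1) := by
  cases n with
  | zero => simp
  | succ p =>
    rw [Finset.sum_range_succ' (fun m => ((p+1).choose m * m) • g m) (p+1)]
    have key : ∀ i, (p+1).choose (i+1) * (i+1) = (p+1) * p.choose i := by
      intro i
      exact (Nat.add_one_mul_choose_eq p i).symm
    simp only [key, mul_zero, zero_smul, add_zero, mul_smul, Nat.add_sub_cancel]
    rw [← Finset.smul_sum]

lemma sub_mul_choose {p m : ℕ} (h : m ≤ p) :
    (p+1-m) * (p+1).choose m = (p+1) * p.choose m := by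
  have h1 : (p+1) * p.choose (p - m) = (p+1).choose (p - m + 1) * (p - m + 1) :=
    Nat.add_one_mul_choose_eq p (p-m)
  have h2 : p.choose (p - m) = p.choose m := Nat.choose_symm h
  have h3 : (p+1).choose (p - m + 1) = (p+1).choose m := by
    have : p - m + 1 = (p+1) - m := by omega
    rw [this, Nat.choose_symm (by omega)]
  have h4 : p + 1 - m = p - m + 1 := by omega
  rw [h4, ← h3, ← h2, h1, mul_comm]

lemma absorb_sum' (n : ℕ) (g : ℕ → M) :
    ∑ m ∈ range (n+1), ((n-m) * n.choose m) • g m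
      = n • ∑ m ∈ range n, (n-1).choose m • g m := by
  cases n with
  | zero => simp
  | succ p =>
    rw [Finset.sum_range_succ]
    simp only [Nat.sub_self, zero_mul, zero_smul, add_zero, Nat.add_sub_cancel]
    have : ∀ m ∈ range (p+1), ((p+1-m) * (p+1).choose m) • g m
        = (p+1) • (p.choose m • g m) := by
      intro m hm
      rw [sub_mul_choose (Nat.lt_succ_iff.mp (mem_range.mp hm)), mul_smul]
    rw [Finset.sum_congr rfl this, ← Finset.smul_sum]

lemma nsmul_split {M' : Type*} [AddCommGroup M'] {m n : ℕ} (h : m ≤ n) (x : M') :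
    (n - m) • x = n • x - m • x := by
  rw [eq_sub_iff_add_eq, ← add_nsmul, Nat.sub_add_cancel h]

end Sums

variable {C : Type*} [CommRing C]

noncomputable def S1sum (H φ ψ : PowerSeries C) (n : ℕ) : PowerSeries C :=
  ∑ m ∈ range (n+1), n.choose m • (AA H m φ * BB H (n-m) ψ)

lemma S2_of_S1 (H : PowerSeries C) (n : ℕ)
    (ih : ∀ φ ψ : PowerSeries C, S1sum H φ ψ n = BB H n (φ * ψ)) (a b : PowerSeries C) :
    ∑ m ∈ range (n+1), n.choose m • (BB H m a * BB H (n-m) b)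
      = BB H n (a*b)
        + n • ∑ m ∈ range n, (n-1).choose m • (BB H m a * BB H (n-1-m) (b * d⁄dX C H)) := by
  have expand : ∀ m ∈ range (n+1), n.choose m • (BB H m a * BB H (n-m) b)
      = n.choose m • (BB H m a * AA H (n-m) b)
        + ((n-m) * n.choose m) • (BB H m a * BB H (n-1-m) (b * d⁄dX C H)) := by
    intro m hm
    have hm' : m ≤ n := Nat.lt_succ_iff.mp (mem_range.mp hm)
    rw [S5 H (n-m) b, mul_add, smul_add, mul_smul_comm, smul_smul,
      show n - m - 1 = n - 1 - m by omega, mul_comm (n.choose m) (n-m)]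
  rw [Finset.sum_congr rfl expand, Finset.sum_add_distrib]
  congr 1
  · have refl1 : ∑ m ∈ range (n+1), n.choose m • (BB H m a * AA H (n-m) b)
        = ∑ m ∈ range (n+1), n.choose m • (AA H m b * BB H (n-m) a) := by
      rw [← Finset.sum_range_reflect (fun m => n.choose m • (BB H m a * AA H (n-m) b)) (n+1)]
      apply Finset.sum_congr rfl
      intro m hm
      have hm' : m ≤ n := Nat.lt_succ_iff.mp (mem_range.mp hm)
      simp only [Nat.add_sub_cancel]
      rw [Nat.choose_symm hm', Nat.sub_sub_self hm', mul_comm]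
    have hba := ih b a
    rw [S1sum] at hba
    rw [refl1, hba, mul_comm b a]
  · exact absorb_sum' n _


lemma S1_all (H : PowerSeries C) :
    ∀ n, ∀ φ ψ : PowerSeries C, S1sum H φ ψ n = BB H n (φ * ψ) := by
  intro n
  induction n with
  | zero =>
    intro φ ψ
    simp [S1sum, AA, BB_zero]
  | succ n ih =>
    intro φ ψ
    rw [S1sum, pascal_sum n (fun m => AA H m φ * BB H (n+1-m) ψ)]
    simp only [Nat.succ_sub_succ_eq_sub]
    -- Sum2 = V n (dφ*H) ψ : apply S2_of_S1
    have sum2 : ∑ m ∈ range (n+1), n.choose m • (AA H (m+1) φ * BB H (n-m) ψ)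
        = BB H n ((d⁄dX C φ * H) * ψ)
          + n • ∑ k ∈ range n, (n-1).choose k •
              (BB H k (d⁄dX C φ * H) * BB H (n-1-k) (ψ * d⁄dX C H)) := by
      simp only [AA_succ]
      exact S2_of_S1 H n ih (d⁄dX C φ * H) ψ
    -- Sum1 split
    have split : ∀ m ∈ range (n+1), n.choose m • (AA H m φ * BB H (n+1-m) ψ)
        = n.choose m • (AA H m φ * BB H (n-m) (d⁄dX C ψ * H))
          + (n.choose m * ((n-m)+1)) • (AA H m φ * BB H (n-m) (ψ * d⁄dX C H)) := by
      intro m hm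
      have hm' : m ≤ n := Nat.lt_succ_iff.mp (mem_range.mp hm)
      rw [show n+1-m = (n-m)+1 by omega, BB_succ, mul_add, smul_add, mul_smul_comm, smul_smul]
    rw [Finset.sum_congr rfl split, Finset.sum_add_distrib]
    -- name the pieces
    have absorbed : ∑ m ∈ range (n+1), (n.choose m * m) • (AA H m φ * BB H (n-m) (ψ * d⁄dX C H))
        = n • ∑ k ∈ range n, (n-1).choose k •
            (BB H k (d⁄dX C φ * H) * BB H (n-1-k) (ψ * d⁄dX C H)) := by
      rw [absorb_sum n (fun m => AA H m φ * BB H (n-m) (ψ * d⁄dX C H))]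
      congr 1
      apply Finset.sum_congr rfl
      intro k hk
      have hk' : k < n := mem_range.mp hk
      rw [AA_succ, show n - (k+1) = n-1-k by omega]
    have wp_plus : (∑ m ∈ range (n+1), (n.choose m * ((n-m)+1)) • (AA H m φ * BB H (n-m) (ψ * d⁄dX C H)))
          + ∑ m ∈ range (n+1), (n.choose m * m) • (AA H m φ * BB H (n-m) (ψ * d⁄dX C H))
        = (n+1) • S1sum H φ (ψ * d⁄dX C H) n := by
      rw [← Finset.sum_add_distrib, S1sum, Finset.smul_sum]
      apply Finset.sum_congr rfl
      intro m hm
      have hm' : m ≤ n := Nat.lt_succ_iff.mp (mem_range.mp hm)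
      rw [← add_smul, smul_smul]
      congr 1
      have : (n-m)+1+m = n+1 := by omega
      calc n.choose m * (n - m + 1) + n.choose m * m
          = n.choose m * ((n-m)+1+m) := by ring
        _ = (n+1) * n.choose m := by rw [this]; ring
    -- assemble
    rw [sum2]
    have key : (∑ m ∈ range (n+1), n.choose m • (AA H m φ * BB H (n-m) (d⁄dX C ψ * H)))
          + (∑ m ∈ range (n+1), (n.choose m * ((n-m)+1)) • (AA H m φ * BB H (n-m) (ψ * d⁄dX C H)))
          + (BB H n ((d⁄dX C φ * H) * ψ)
            + n • ∑ k ∈ range n, (n-1).choose k •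
                (BB H k (d⁄dX C φ * H) * BB H (n-1-k) (ψ * d⁄dX C H)))
        = S1sum H φ (d⁄dX C ψ * H) n + (n+1) • S1sum H φ (ψ * d⁄dX C H) n
          + BB H n ((d⁄dX C φ * H) * ψ) := by
      rw [← absorbed, ← wp_plus, S1sum]
      abel
    rw [key, ih φ (d⁄dX C ψ * H), ih φ (ψ * d⁄dX C H)]
    -- final combination
    rw [BB_succ H n (φ*ψ)]
    have harg : φ * (d⁄dX C ψ * H) + (d⁄dX C φ * H) * ψ = d⁄dX C (φ * ψ) * H := by
      rw [Derivation.leibniz]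
      simp only [smul_eq_mul]
      ring
    rw [← harg, BB_add]
    have harg2 : φ * (ψ * d⁄dX C H) = (φ * ψ) * d⁄dX C H := by ring
    rw [harg2]
    abel

end PfaffCauchyAux

/-- The Pfaff–Cauchy convolution identity: for formal power series `φ, ψ, H` over a
commutative ring containing `ℚ` and every `n ≥ 0`,
`∑_{m=0}^{n} C(n,m)·A_m·D^{n−m}(ψ·H^{n−m}) = D^{n}(φ·ψ·H^{n})`,
where `A₀ = φ` and `A_m = D^{m−1}(φ'·H^m)` for `m ≥ 1`. -/
theorem pfaff_cauchy_convolution (C : Type*) [CommRing C] [Algebra ℚ C]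
    (φ ψ H : PowerSeries C) (n : ℕ) :
    ∑ m ∈ Finset.range (n + 1),
        (n.choose m : PowerSeries C) *
          (if m = 0 then φ else (fun g => d⁄dX C g)^[m - 1] (d⁄dX C φ * H ^ m)) *
          (fun g => d⁄dX C g)^[n - m] (ψ * H ^ (n - m)) =
      (fun g => d⁄dX C g)^[n] (φ * ψ * H ^ n) := by
  have main := PfaffCauchyAux.S1_all H n φ ψ
  rw [PfaffCauchyAux.S1sum] at main
  have bridge : ∀ m ∈ Finset.range (n+1),
      (n.choose m : PowerSeries C) *
          (if m = 0 then φ else (fun g => d⁄dX C g)^[m - 1] (d⁄dX C φ * H ^ m)) *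
          (fun g => d⁄dX C g)^[n - m] (ψ * H ^ (n - m))
        = n.choose m • (PfaffCauchyAux.AA H m φ * PfaffCauchyAux.BB H (n-m) ψ) := by
    intro m _
    rw [nsmul_eq_mul, mul_assoc]
    congr 2
    cases m with
    | zero => simp [PfaffCauchyAux.AA]
    | succ k =>
      simp only [Nat.succ_ne_zero, if_false, Nat.succ_sub_one]
      rw [PfaffCauchyAux.AA_succ, PfaffCauchyAux.BB]
      congr 1
      rw [mul_assoc, ← pow_succ']
  rw [Finset.sum_congr rfl bridge, main, PfaffCauchyAux.BB]
end

section
/- Let T(x) be the tree function, i.e., the unique formal power series over ℚ with zero constant term satisfying T = x·exp(T). Then for all integers n ≥ k ≥ 1, the coefficient of x^n in T(x)^k satisfies (n!/k!)·[x^n] T^k = C(n−1, k−1) · n^{n−k}. Equivalently, T^k/k! = Σ_{n≥k} C(n−1,k−1) n^{n−k} x^n/n!. -/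
open PowerSeries

open Finset


lemma binomB1 (N x : ℕ) :
    ∑ m ∈ Finset.range (N + 1), N.choose m * x ^ (N - m) = (x + 1) ^ N := by
  have := add_pow (1 : ℕ) x N
  simpa [one_pow, mul_comm, add_comm] using this.symm

lemma binomB2 (P x : ℕ) :
    ∑ m ∈ Finset.range (P + 2), m * ((P + 1).choose m * x ^ (P + 1 - m))
      = (P + 1) * (x + 1) ^ P := by
  rw [Finset.sum_range_succ']
  simp only [Nat.zero_eq, Nat.mul_zero, Nat.zero_mul, add_zero]
  have h : ∀ i ∈ Finset.range (P + 1),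
      (i + 1) * ((P + 1).choose (i + 1) * x ^ (P + 1 - (i + 1)))
        = (P + 1) * (P.choose i * x ^ (P - i)) := by
    intro i _
    have := Nat.add_one_mul_choose_eq P i
    have e : P + 1 - (i + 1) = P - i := by omega
    rw [e]
    calc (i + 1) * ((P + 1).choose (i + 1) * x ^ (P - i))
        = ((P + 1).choose (i + 1) * (i + 1)) * x ^ (P - i) := by ring
      _ = ((P + 1) * P.choose i) * x ^ (P - i) := by
          rw [show (P + 1).choose (i + 1) * (i + 1) = (P + 1) * P.choose i from (Nat.add_one_mul_choose_eq P i).symm]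
      _ = (P + 1) * (P.choose i * x ^ (P - i)) := by ring
  rw [Finset.sum_congr rfl h, ← Finset.mul_sum, binomB1]

lemma natclaim (P t m : ℕ) (hm : m ≤ P + 1) :
    (P + 1) * ((P + t + 1).choose (m + t) * (m + t + 1).choose (t + 1))
      = (m + t + 1) * ((P + 1).choose m * (P + t + 1).choose (t + 1)) := by
  obtain ⟨d, hd⟩ : ∃ d, P + 1 = m + d := ⟨P + 1 - m, by omega⟩
  have h1 : m + t ≤ P + t + 1 := by omega
  have h2 : t + 1 ≤ m + t + 1 := by omega
  have h3 : m ≤ P + 1 := hm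
  have h4 : t + 1 ≤ P + t + 1 := by omega
  have e1 : P + t + 1 - (m + t) = d := by omega
  have e2 : m + t + 1 - (t + 1) = m := by omega
  have e3 : P + 1 - m = d := by omega
  have e4 : P + t + 1 - (t + 1) = P := by omega
  have := @Nat.cast_injective ℚ _ _
  apply this
  push_cast
  rw [Nat.cast_choose ℚ h1, Nat.cast_choose ℚ h2, Nat.cast_choose ℚ h3,
    Nat.cast_choose ℚ h4, e1, e2, e3, e4]
  have f1 : ((m + t + 1).factorial : ℚ) = (m + t + 1) * (m + t).factorial := by
    rw [show m + t + 1 = (m + t) + 1 from rfl, Nat.factorial_succ]; push_cast; ring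
  have f2 : ((P + 1).factorial : ℚ) = (P + 1) * P.factorial := by
    rw [Nat.factorial_succ]; push_cast; ring
  rw [f1, f2]
  have p1 : ((m + t).factorial : ℚ) ≠ 0 := by positivity
  have p2 : ((t + 1).factorial : ℚ) ≠ 0 := by positivity
  have p3 : (m.factorial : ℚ) ≠ 0 := by positivity
  have p4 : (d.factorial : ℚ) ≠ 0 := by positivity
  have p5 : (P.factorial : ℚ) ≠ 0 := by positivity
  field_simp

lemma natsum (P t : ℕ) :
    ∑ m ∈ Finset.range (P + 2),
        (P + t + 1).choose (m + t) * (m + t + 1).choose (t + 1) * (P + t + 2) ^ (P + 1 - m)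
      = (P + t + 2).choose (t + 1) * (t + 2) * (P + t + 3) ^ P := by
  apply Nat.eq_of_mul_eq_mul_left (show 0 < P + 1 by omega)
  rw [Finset.mul_sum]
  have h : ∀ m ∈ Finset.range (P + 2),
      (P + 1) * ((P + t + 1).choose (m + t) * (m + t + 1).choose (t + 1) * (P + t + 2) ^ (P + 1 - m))
        = (P + t + 1).choose (t + 1) *
            ((m + t + 1) * ((P + 1).choose m * (P + t + 2) ^ (P + 1 - m))) := by
    intro m hm
    have hm' : m ≤ P + 1 := by simpa using Nat.lt_succ_iff.mp (Finset.mem_range.mp hm)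
    have := natclaim P t m hm'
    calc (P + 1) * ((P + t + 1).choose (m + t) * (m + t + 1).choose (t + 1) * (P + t + 2) ^ (P + 1 - m))
        = (P + 1) * ((P + t + 1).choose (m + t) * (m + t + 1).choose (t + 1)) * (P + t + 2) ^ (P + 1 - m) := by ring
      _ = (m + t + 1) * ((P + 1).choose m * (P + t + 1).choose (t + 1)) * (P + t + 2) ^ (P + 1 - m) := by rw [this]
      _ = (P + t + 1).choose (t + 1) * ((m + t + 1) * ((P + 1).choose m * (P + t + 2) ^ (P + 1 - m))) := by ring
  rw [Finset.sum_congr rfl h, ← Finset.mul_sum]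
  -- inner sum
  have inner : ∑ m ∈ Finset.range (P + 2), (m + t + 1) * ((P + 1).choose m * (P + t + 2) ^ (P + 1 - m))
      = (P + t + 2) * (t + 2) * (P + t + 3) ^ P := by
    have split : ∀ m, (m + t + 1) * ((P + 1).choose m * (P + t + 2) ^ (P + 1 - m))
        = m * ((P + 1).choose m * (P + t + 2) ^ (P + 1 - m))
          + (t + 1) * ((P + 1).choose m * (P + t + 2) ^ (P + 1 - m)) := by
      intro m; ring
    rw [Finset.sum_congr rfl (fun m _ => split m), Finset.sum_add_distrib,
      binomB2 P (P + t + 2), ← Finset.mul_sum]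
    have b1 : ∑ m ∈ Finset.range (P + 2), (P + 1).choose m * (P + t + 2) ^ (P + 1 - m)
        = (P + t + 3) ^ (P + 1) := by
      have := binomB1 (P + 1) (P + t + 2)
      rw [show P + t + 2 + 1 = P + t + 3 from rfl] at this
      exact this
    rw [b1]
    have : P + t + 2 + 1 = P + t + 3 := rfl
    rw [this, pow_succ]
    ring
  rw [inner]
  -- now: C(P+t+1, t+1) * ((P+t+2) * (t+2) * (P+t+3)^P) = (P+1) * (C(P+t+2,t+1) * (t+2) * (P+t+3)^P)
  have key : (P + t + 2) * (P + t + 1).choose (t + 1) = (P + 1) * (P + t + 2).choose (t + 1) := by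
    have s1 : (P + t + 1).choose (t + 1) = (P + t + 1).choose P := by
      rw [← Nat.choose_symm (show t + 1 ≤ P + t + 1 by omega)]
      congr 1; omega
    have s2 : (P + t + 2).choose (t + 1) = (P + t + 2).choose (P + 1) := by
      rw [← Nat.choose_symm (show t + 1 ≤ P + t + 2 by omega)]
      congr 1; omega
    have h5 := Nat.add_one_mul_choose_eq (P + t + 1) P
    rw [s1, s2, show P + t + 2 = P + t + 1 + 1 by omega, h5, mul_comm]
  calc (P + t + 1).choose (t + 1) * ((P + t + 2) * (t + 2) * (P + t + 3) ^ P)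
      = ((P + t + 2) * (P + t + 1).choose (t + 1)) * ((t + 2) * (P + t + 3) ^ P) := by ring
    _ = ((P + 1) * (P + t + 2).choose (t + 1)) * ((t + 2) * (P + t + 3) ^ P) := by rw [key]
    _ = (P + 1) * ((P + t + 2).choose (t + 1) * (t + 2) * (P + t + 3) ^ P) := by ring

noncomputable def G (n k : ℕ) : ℚ :=
  if k = 0 then (if n = 0 then 1 else 0)
  else if k ≤ n then
    ((n - 1).choose (k - 1) : ℚ) * (n : ℚ) ^ (n - k) * k.factorial / n.factorial
  else 0

lemma G_zero_of_gt {n k : ℕ} (hk : k ≠ 0) (h : n < k) : G n k = 0 := by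
  simp [G, hk, not_le.mpr h]

lemma G_self (n : ℕ) : G n n = 1 := by
  rcases Nat.eq_zero_or_pos n with rfl | hn
  · simp [G]
  · have hn' : n ≠ 0 := by omega
    simp [G, hn', Nat.choose_self, Nat.sub_self]
    exact Nat.factorial_ne_zero n

lemma key_s7 (r s : ℕ) :
    ∑ m ∈ Finset.range (r + 1), ((m.factorial : ℚ))⁻¹ * G r (m + s) = G (r + 1) (s + 1) := by
  rcases lt_trichotomy r s with hrs | rfl | hsr
  · -- r < s : everything vanishes
    have hs : s ≠ 0 := by omega
    rw [Finset.sum_eq_zero, G_zero_of_gt (by omega) (by omega)]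
    intro m _
    rw [G_zero_of_gt (by omega) (by omega), mul_zero]
  · -- s = r
    rw [Finset.sum_range_succ']
    have h0 : ∀ i ∈ Finset.range r, (((i + 1).factorial : ℚ))⁻¹ * G r (i + 1 + r) = 0 := by
      intro i _
      rw [G_zero_of_gt (by omega) (by omega), mul_zero]
    rw [Finset.sum_eq_zero h0]
    simp [G_self]
  · -- s < r
    rcases s with _ | t
    · -- s = 0, r ≥ 1
      obtain ⟨Q, rfl⟩ : ∃ Q, r = Q + 1 := ⟨r - 1, by omega⟩
      rw [Finset.sum_range_succ']
      have h0 : ((Nat.factorial 0 : ℚ))⁻¹ * G (Q + 1) (0 + 0) = 0 := by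
        simp [G]
      rw [h0, add_zero]
      have h1 : ∀ i ∈ Finset.range (Q + 1),
          (((i + 1).factorial : ℚ))⁻¹ * G (Q + 1) (i + 1 + 0)
            = ((Q.choose i * (Q + 1) ^ (Q - i) : ℕ) : ℚ) / ((Q + 1).factorial : ℚ) := by
        intro i hi
        have hi' := Finset.mem_range.mp hi
        have hle : i + 1 ≤ Q + 1 := by omega
        simp only [add_zero, G, Nat.succ_ne_zero, if_false, hle, if_true,
          Nat.add_sub_cancel]
        have e : Q + 1 - (i + 1) = Q - i := by omega
        rw [e]
        have hfac : (((i + 1).factorial : ℚ)) ≠ 0 := by positivity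
        push_cast
        field_simp
      rw [Finset.sum_congr rfl h1, ← Finset.sum_div, ← Nat.cast_sum, binomB1 Q (Q + 1)]
      -- goal : ((Q+1+1)^Q : ℚ) / (Q+1)! = G (Q+2) 1
      have hG : G (Q + 1 + 1) (0 + 1) = ((Q + 2 : ℚ)) ^ (Q + 1) / ((Q + 2).factorial : ℚ) := by
        simp only [G, zero_add, Nat.one_ne_zero, if_false, show (1 : ℕ) ≤ Q + 1 + 1 by omega,
          if_true]
        rw [show Q + 1 + 1 - 1 = Q + 1 by omega, show Q + 1 + 1 = Q + 2 by omega]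
        push_cast
        norm_num
      rw [hG]
      rw [show (Q + 2).factorial = (Q + 2) * (Q + 1).factorial from Nat.factorial_succ (Q + 1)]
      have hfac : (((Q + 1).factorial : ℚ)) ≠ 0 := by positivity
      push_cast
      rw [pow_succ]
      field_simp
      ring
    · -- s = t + 1, r > t + 1
      obtain ⟨P, rfl⟩ : ∃ P, r = P + t + 2 := ⟨r - t - 2, by omega⟩
      have hsub : Finset.range (P + 2) ⊆ Finset.range (P + t + 2 + 1) :=
        Finset.range_subset_range.mpr (by omega)
      rw [← Finset.sum_subset hsub (fun m _ hm => by
        have hm' : P + 2 ≤ m := by simpa using hm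
        rw [G_zero_of_gt (by omega) (by omega), mul_zero])]
      have hterm : ∀ m ∈ Finset.range (P + 2),
          ((m.factorial : ℚ))⁻¹ * G (P + t + 2) (m + (t + 1))
            = (((P + t + 1).choose (m + t) * (m + t + 1).choose (t + 1)
                  * (P + t + 2) ^ (P + 1 - m) : ℕ) : ℚ)
                * (((t + 1).factorial : ℚ) / ((P + t + 2).factorial : ℚ)) := by
        intro m hm
        have hm' : m ≤ P + 1 := by
          have := Finset.mem_range.mp hm; omega
        have hne : m + (t + 1) ≠ 0 := by omega
        have hle : m + (t + 1) ≤ P + t + 2 := by omega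
        simp only [G, hne, if_false, hle, if_true]
        rw [show P + t + 2 - 1 = P + t + 1 by omega,
          show m + (t + 1) - 1 = m + t by omega,
          show P + t + 2 - (m + (t + 1)) = P + 1 - m by omega,
          show m + (t + 1) = m + t + 1 by omega]
        have hch := Nat.cast_choose ℚ (show t + 1 ≤ m + t + 1 by omega)
        rw [show m + t + 1 - (t + 1) = m by omega] at hch
        have p1 : ((m.factorial : ℚ)) ≠ 0 := by positivity
        have p2 : (((t + 1).factorial : ℚ)) ≠ 0 := by positivity
        have p3 : (((P + t + 2).factorial : ℚ)) ≠ 0 := by positivity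
        push_cast [hch]
        field_simp
      rw [Finset.sum_congr rfl hterm, ← Finset.sum_mul, ← Nat.cast_sum, natsum P t]
      have hne2 : t + 2 ≠ 0 := by omega
      have hle2 : t + 2 ≤ P + t + 2 + 1 := by omega
      simp only [show t + 1 + 1 = t + 2 from rfl, G, hne2, if_false, hle2, if_true]
      rw [show P + t + 2 + 1 - 1 = P + t + 2 by omega,
        show t + 2 - 1 = t + 1 by omega,
        show P + t + 2 + 1 - (t + 2) = P + 1 by omega,
        show (P + t + 2 + 1).factorial = (P + t + 2 + 1) * (P + t + 2).factorial
          from Nat.factorial_succ _,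
        show (t + 2).factorial = (t + 2) * (t + 1).factorial from Nat.factorial_succ _]
      have p3 : (((P + t + 2).factorial : ℚ)) ≠ 0 := by positivity
      have p2 : (((t + 1).factorial : ℚ)) ≠ 0 := by positivity
      push_cast
      rw [pow_succ]
      field_simp
      ring

section PS

variable (T : PowerSeries ℚ)

lemma coeff_pow_eq_zero (hT0 : constantCoeff T = 0) {n k : ℕ} (h : n < k) : coeff n (T ^ k) = 0 := by
  have hdvd : (X : PowerSeries ℚ) ^ k ∣ T ^ k :=
    pow_dvd_pow_of_dvd (PowerSeries.X_dvd_iff.mpr hT0) k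
  exact PowerSeries.X_pow_dvd_iff.mp hdvd n h

lemma coeff_psComp_exp (hT0 : constantCoeff T = 0) {i r : ℕ} (hir : i ≤ r) :
    coeff i (psComp (PowerSeries.exp ℚ) T)
      = ∑ m ∈ Finset.range (r + 1), ((m.factorial : ℚ))⁻¹ * coeff i (T ^ m) := by
  rw [psComp, coeff_mk]
  have hsub : Finset.range (i + 1) ⊆ Finset.range (r + 1) :=
    Finset.range_subset_range.mpr (by omega)
  rw [Finset.sum_subset hsub (fun m _ hm => by
    have hm' : i + 1 ≤ m := by simpa using hm
    rw [coeff_pow_eq_zero T hT0 (by omega), mul_zero])]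
  refine Finset.sum_congr rfl fun m _ => ?_
  rw [PowerSeries.coeff_exp]
  norm_num

lemma coeff_recurrence (hT0 : constantCoeff T = 0) (hT : T = X * psComp (PowerSeries.exp ℚ) T) (r s : ℕ) :
    coeff (r + 1) (T ^ (s + 1))
      = ∑ m ∈ Finset.range (r + 1), ((m.factorial : ℚ))⁻¹ * coeff r (T ^ (m + s)) := by
  set S := psComp (PowerSeries.exp ℚ) T with hS
  have h1 : T ^ (s + 1) = X * (S * T ^ s) := by
    calc T ^ (s + 1) = T * T ^ s := by ring
      _ = (X * S) * T ^ s := by rw [← hT]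
      _ = X * (S * T ^ s) := by ring
  rw [h1, PowerSeries.coeff_succ_X_mul, PowerSeries.coeff_mul]
  have h2 : ∀ p ∈ Finset.HasAntidiagonal.antidiagonal r,
      coeff p.1 S * coeff p.2 (T ^ s)
        = ∑ m ∈ Finset.range (r + 1),
            ((m.factorial : ℚ))⁻¹ * (coeff p.1 (T ^ m) * coeff p.2 (T ^ s)) := by
    intro p hp
    have hp1 : p.1 ≤ r := by
      have := Finset.HasAntidiagonal.antidiagonal.fst_le hp; omega
    rw [coeff_psComp_exp T hT0 hp1, Finset.sum_mul]
    refine Finset.sum_congr rfl fun m _ => by ring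
  rw [Finset.sum_congr rfl h2, Finset.sum_comm]
  refine Finset.sum_congr rfl fun m _ => ?_
  rw [← Finset.mul_sum, ← PowerSeries.coeff_mul, ← pow_add]

end PS

lemma tree_main (T : PowerSeries ℚ) (hT0 : constantCoeff T = 0)
    (hT : T = X * psComp (PowerSeries.exp ℚ) T) :
    ∀ n k, coeff n (T ^ k) = G n k := by
  intro n
  induction n using Nat.strong_induction_on with
  | _ n ih =>
    intro k
    rcases n with _ | r
    · rcases k with _ | k
      · simp [G]
      · rw [coeff_zero_eq_constantCoeff, map_pow, hT0]
        simp [G]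
    · rcases k with _ | s
      · simp [G, PowerSeries.coeff_one]
      · rw [coeff_recurrence T hT0 hT r s,
          Finset.sum_congr rfl (fun m _ => by rw [ih r (by omega) (m + s)])]
        exact key_s7 r s

/-- Let `T` be the tree function, the unique power series over `ℚ` with zero constant
term satisfying `T = x·exp(T)`.  Then for `n ≥ k ≥ 1`,
`(n!/k!)·[xⁿ] T^k = C(n−1, k−1)·n^{n−k}`. -/
theorem tree_function_power_coeff (T : PowerSeries ℚ)
    (hT0 : constantCoeff T = 0) (hT : T = X * psComp (PowerSeries.exp ℚ) T)
    (n k : ℕ) (hk : 1 ≤ k) (hkn : k ≤ n) :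
    ((n.factorial : ℚ) / (k.factorial : ℚ)) * coeff n (T ^ k) =
      ((n - 1).choose (k - 1) : ℚ) * (n : ℚ) ^ (n - k) := by
  rw [tree_main T hT0 hT n k]
  have hk0 : k ≠ 0 := by omega
  simp only [G, hk0, if_false, hkn, if_true]
  have h1 : (n.factorial : ℚ) ≠ 0 := by positivity
  have h2 : (k.factorial : ℚ) ≠ 0 := by positivity
  field_simp
end

section
/- Let T(x) be the tree function, i.e., the unique formal power series over ℝ with zero constant term satisfying T = x·exp(T). Let l be a positive integer and let k be a positive real number. Then there exists a polynomial p(u) over ℝ of degree exactly l−1 such that Σ_{n≥0} (n+k)^{n−l} x^n/n! = exp(k·T(x)) · p(T(x)) as formal power series over ℝ. -/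
open PowerSeries

open Finset

/-- `A n j = ∑_{b=0}^n (-1)^b C(n,b) b^j`. -/
noncomputable def altA (n j : ℕ) : ℝ :=
  ∑ b ∈ range (n + 1), (-1 : ℝ) ^ b * (n.choose b : ℝ) * (b : ℝ) ^ j

lemma altA_succ (n j : ℕ) :
    altA (n + 1) j = altA n j - ∑ t ∈ range (j + 1), (j.choose t : ℝ) * altA n t := by
  have h1 : altA (n + 1) j
      = (∑ i ∈ range (n + 1), (-1 : ℝ) ^ (i+1) * ((n+1).choose (i+1) : ℝ) * ((i+1 : ℕ) : ℝ) ^ j)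
        + (-1 : ℝ) ^ 0 * ((n+1).choose 0 : ℝ) * ((0 : ℕ) : ℝ) ^ j := by
    rw [altA, Finset.sum_range_succ']
  have h2 : ∀ i, ((n+1).choose (i+1) : ℝ) = (n.choose i : ℝ) + (n.choose (i+1) : ℝ) := by
    intro i
    rw [Nat.choose_succ_succ]
    push_cast
    ring
  rw [h1]
  have h3 : (∑ i ∈ range (n + 1), (-1 : ℝ) ^ (i+1) * ((n+1).choose (i+1) : ℝ) * ((i+1 : ℕ) : ℝ) ^ j)
      = (∑ i ∈ range (n + 1), (-1 : ℝ) ^ (i+1) * (n.choose i : ℝ) * ((i+1 : ℕ) : ℝ) ^ j)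
        + (∑ i ∈ range (n + 1), (-1 : ℝ) ^ (i+1) * (n.choose (i+1) : ℝ) * ((i+1 : ℕ) : ℝ) ^ j) := by
    rw [← Finset.sum_add_distrib]
    refine Finset.sum_congr rfl fun i _ => ?_
    rw [h2]; ring
  rw [h3]
  -- third sum + 0 term = altA n j
  have h4 : (∑ i ∈ range (n + 1), (-1 : ℝ) ^ (i+1) * (n.choose (i+1) : ℝ) * ((i+1 : ℕ) : ℝ) ^ j)
        + (-1 : ℝ) ^ 0 * ((n+1).choose 0 : ℝ) * ((0 : ℕ) : ℝ) ^ j = altA n j := by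
    have : altA n j + (-1 : ℝ) ^ (n+1) * (n.choose (n+1) : ℝ) * ((n+1 : ℕ) : ℝ) ^ j
        = (∑ i ∈ range (n + 1), (-1 : ℝ) ^ (i+1) * (n.choose (i+1) : ℝ) * ((i+1 : ℕ) : ℝ) ^ j)
          + (-1 : ℝ) ^ 0 * (n.choose 0 : ℝ) * ((0 : ℕ) : ℝ) ^ j := by
      rw [altA, ← Finset.sum_range_succ, Finset.sum_range_succ']
    simp only [Nat.choose_succ_self, Nat.cast_zero, mul_zero, zero_mul, add_zero] at this
    rw [this]
    simp
  -- second sum = - ∑_t C(j,t) altA n t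
  have h5 : (∑ i ∈ range (n + 1), (-1 : ℝ) ^ (i+1) * (n.choose i : ℝ) * ((i+1 : ℕ) : ℝ) ^ j)
      = - ∑ t ∈ range (j + 1), (j.choose t : ℝ) * altA n t := by
    have expand : ∀ i : ℕ, ((i+1 : ℕ) : ℝ) ^ j = ∑ t ∈ range (j + 1), (i : ℝ) ^ t * (j.choose t : ℝ) := by
      intro i
      have := add_pow (i : ℝ) 1 j
      simpa using this
    calc (∑ i ∈ range (n + 1), (-1 : ℝ) ^ (i+1) * (n.choose i : ℝ) * ((i+1 : ℕ) : ℝ) ^ j)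
        = ∑ i ∈ range (n + 1), ∑ t ∈ range (j + 1),
            (j.choose t : ℝ) * (-((-1 : ℝ) ^ i * (n.choose i : ℝ) * (i : ℝ) ^ t)) := by
          refine Finset.sum_congr rfl fun i _ => ?_
          rw [expand, Finset.mul_sum]
          refine Finset.sum_congr rfl fun t _ => ?_
          rw [pow_succ]
          ring
      _ = ∑ t ∈ range (j + 1), ∑ i ∈ range (n + 1),
            (j.choose t : ℝ) * (-((-1 : ℝ) ^ i * (n.choose i : ℝ) * (i : ℝ) ^ t)) := Finset.sum_comm
      _ = - ∑ t ∈ range (j + 1), (j.choose t : ℝ) * altA n t := by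
          rw [← Finset.sum_neg_distrib]
          refine Finset.sum_congr rfl fun t _ => ?_
          rw [altA, Finset.mul_sum, ← Finset.sum_neg_distrib]
          refine Finset.sum_congr rfl fun i _ => ?_
          ring
  rw [h5]
  linarith [h4]

lemma altA_eq_zero : ∀ n, ∀ j < n, altA n j = 0 := by
  intro n
  induction n with
  | zero => intro j hj; omega
  | succ n ih =>
    intro j hj
    rw [altA_succ]
    rcases Nat.lt_or_ge j n with h | h
    · rw [ih j h]
      have : ∑ t ∈ range (j + 1), (j.choose t : ℝ) * altA n t = 0 := by
        refine Finset.sum_eq_zero fun t ht => ?_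
        rw [ih t (by simp at ht; omega)]
        ring
      rw [this]; ring
    · have hjn : j = n := by omega
      subst hjn
      rw [Finset.sum_range_succ]
      have : ∑ t ∈ range j, (j.choose t : ℝ) * altA j t = 0 := by
        refine Finset.sum_eq_zero fun t ht => ?_
        rw [ih t (by simpa using ht)]
        ring
      rw [this]
      simp

section AbelPolynomial
open Polynomial

noncomputable def abelP (n : ℕ) (c : ℝ) : Polynomial ℝ :=
  ∑ b ∈ Finset.Icc 1 n, Polynomial.C ((n.choose b : ℝ) * (b : ℝ) ^ (b - 1)) *
    (Polynomial.X + Polynomial.C (c - b)) ^ (n - b)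

lemma choose_mul_sub (n b : ℕ) : (n+1).choose b * (n+1-b) = (n+1) * n.choose b := by
  have h1 := Nat.choose_succ_right_eq (n+1) b
  have h2 := Nat.add_one_mul_choose_eq n b
  omega

lemma abelP_deriv (n : ℕ) (c : ℝ) :
    Polynomial.derivative (abelP (n+1) c) = Polynomial.C ((n:ℝ)+1) * abelP n c := by
  rw [abelP, Finset.sum_Icc_succ_top (by omega), map_add]
  have hlast : Polynomial.derivative (Polynomial.C (((n+1).choose (n+1) : ℝ) * ((n+1:ℕ) : ℝ) ^ (n+1-1)) *
      (Polynomial.X + Polynomial.C (c - ((n+1:ℕ):ℝ))) ^ (n+1-(n+1))) = 0 := by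
    rw [Nat.sub_self, pow_zero, mul_one, Polynomial.derivative_C]
  rw [hlast, add_zero, map_sum, abelP, Finset.mul_sum]
  refine Finset.sum_congr rfl fun b hb => ?_
  simp only [Finset.mem_Icc] at hb
  have he : n + 1 - b - 1 = n - b := by omega
  rw [Polynomial.derivative_mul, Polynomial.derivative_C, zero_mul, zero_add, Polynomial.derivative_pow, Polynomial.derivative_add,
    Polynomial.derivative_X, Polynomial.derivative_C, add_zero, mul_one, he]
  simp only [← mul_assoc, ← Polynomial.C_mul]
  congr 2
  have hc := choose_mul_sub n b
  calc ((n+1).choose b : ℝ) * (b:ℝ)^(b-1) * ((n+1-b : ℕ) : ℝ)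
      = (((n+1).choose b * (n+1-b) : ℕ) : ℝ) * (b:ℝ)^(b-1) := by push_cast; ring
    _ = (((n+1) * n.choose b : ℕ) : ℝ) * (b:ℝ)^(b-1) := by rw [hc]
    _ = ((n:ℝ)+1) * (n.choose b : ℝ) * (b:ℝ)^(b-1) := by push_cast; ring

lemma abelP_eval_neg (n : ℕ) (hn : 2 ≤ n) (c : ℝ) : (abelP n c).eval (-c) = 0 := by
  rw [abelP]
  simp only [eval_finset_sum, eval_mul, eval_pow, eval_add, eval_C, eval_X]
  have hterm : ∀ b ∈ Finset.Icc 1 n,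
      (n.choose b : ℝ) * (b:ℝ)^(b-1) * (-c + (c - b))^(n-b)
        = (-1:ℝ)^n * ((-1:ℝ)^b * (n.choose b : ℝ) * (b:ℝ)^(n-1)) := by
    intro b hb
    simp only [Finset.mem_Icc] at hb
    have h1 : (-c + (c - (b:ℝ))) = -(b:ℝ) := by ring
    rw [h1, neg_pow]
    have h2 : (-1:ℝ)^(n-b) * (-1:ℝ)^b = (-1:ℝ)^n := by
      rw [← pow_add]; congr 1; omega
    have h3 : (-1:ℝ)^(n-b) = (-1:ℝ)^n * (-1:ℝ)^b := by
      have hsq : ((-1:ℝ)^b)*((-1:ℝ)^b) = 1 := by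
        rw [← pow_add, ← two_mul, pow_mul]; norm_num
      calc (-1:ℝ)^(n-b) = (-1:ℝ)^(n-b) * (((-1:ℝ)^b)*((-1:ℝ)^b)) := by rw [hsq, mul_one]
        _ = ((-1:ℝ)^(n-b) * (-1:ℝ)^b) * (-1:ℝ)^b := by ring
        _ = (-1:ℝ)^n * (-1:ℝ)^b := by rw [h2]
    have h4 : (b:ℝ)^(b-1) * (b:ℝ)^(n-b) = (b:ℝ)^(n-1) := by
      rw [← pow_add]; congr 1; omega
    calc (n.choose b : ℝ) * (b:ℝ)^(b-1) * ((-1:ℝ)^(n-b) * (b:ℝ)^(n-b))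
        = (-1:ℝ)^(n-b) * (n.choose b : ℝ) * ((b:ℝ)^(b-1) * (b:ℝ)^(n-b)) := by ring
      _ = (-1:ℝ)^(n-b) * (n.choose b : ℝ) * (b:ℝ)^(n-1) := by rw [h4]
      _ = (-1:ℝ)^n * ((-1:ℝ)^b * (n.choose b : ℝ) * (b:ℝ)^(n-1)) := by rw [h3]; ring
  rw [Finset.sum_congr rfl hterm, ← Finset.mul_sum]
  have hzero : ∑ b ∈ Finset.Icc 1 n, (-1:ℝ)^b * (n.choose b : ℝ) * (b:ℝ)^(n-1) = 0 := by
    have hfull : altA n (n-1) = 0 := altA_eq_zero n (n-1) (by omega)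
    have hsplit : altA n (n-1)
        = (-1:ℝ)^0 * (n.choose 0 : ℝ) * ((0:ℕ):ℝ)^(n-1)
          + ∑ b ∈ Finset.Icc 1 n, (-1:ℝ)^b * (n.choose b : ℝ) * (b:ℝ)^(n-1) := by
      rw [altA, Finset.sum_range_succ']
      rw [add_comm]
      congr 1
      rw [show Finset.Icc 1 n = Finset.Ico 1 (n+1) from (Finset.Ico_add_one_right_eq_Icc ..).symm,
        Finset.sum_Ico_eq_sum_range]
      simp only [Nat.add_sub_cancel]
      refine Finset.sum_congr rfl fun i _ => ?_
      rw [add_comm 1 i]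
    have h0 : ((0:ℕ):ℝ)^(n-1) = 0 := by
      rw [Nat.cast_zero]; exact zero_pow (by omega)
    rw [hsplit, h0] at hfull
    simpa using hfull
  rw [hzero, mul_zero]

lemma abelP_eq (n : ℕ) (hn : 1 ≤ n) (c : ℝ) :
    abelP n c = Polynomial.C (n:ℝ) * (Polynomial.X + Polynomial.C c) ^ (n-1) := by
  induction n, hn using Nat.le_induction generalizing c with
  | base =>
      rw [abelP]
      simp
  | succ n hn ih =>
      have hderiv : Polynomial.derivative (abelP (n+1) c
          - Polynomial.C ((n+1:ℕ):ℝ) * (Polynomial.X + Polynomial.C c) ^ n) = 0 := by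
        rw [map_sub, abelP_deriv, ih c, Polynomial.derivative_mul, Polynomial.derivative_C, zero_mul, zero_add,
          Polynomial.derivative_pow, Polynomial.derivative_add, Polynomial.derivative_X, Polynomial.derivative_C, add_zero, mul_one]
        push_cast
        ring
      have hC := Polynomial.eq_C_of_derivative_eq_zero hderiv
      have heval : (abelP (n+1) c
          - Polynomial.C ((n+1:ℕ):ℝ) * (Polynomial.X + Polynomial.C c) ^ n).eval (-c) = 0 := by
        rw [eval_sub, abelP_eval_neg (n+1) (by omega) c]
        simp only [eval_mul, eval_pow, eval_add, eval_C, eval_X]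
        rw [neg_add_cancel, zero_pow (by omega : n ≠ 0)]
        ring
      rw [hC, eval_C] at heval
      rw [heval, map_zero, sub_eq_zero] at hC
      rw [hC]
      push_cast
      norm_num



end AbelPolynomial

open PowerSeries

lemma coeff_psComp (φ f : PowerSeries ℝ) (m : ℕ) :
    coeff m (psComp φ f) = ∑ n ∈ range (m+1), coeff n φ * coeff m (f ^ n) := by
  rw [psComp, coeff_mk]

lemma coeff_pow_eq_zero_s10 {f : PowerSeries ℝ} (hf : constantCoeff f = 0) {m n : ℕ}
    (h : m < n) : coeff m (f ^ n) = 0 := by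
  obtain ⟨g, hg⟩ := PowerSeries.X_dvd_iff.mpr hf
  rw [hg, mul_pow, PowerSeries.coeff_X_pow_mul', if_neg (by omega)]

lemma coeff_exp' (n : ℕ) : coeff n (exp ℝ) = 1 / (n.factorial : ℝ) := by
  rw [PowerSeries.coeff_exp]
  push_cast
  norm_num

lemma constantCoeff_psComp_exp {f : PowerSeries ℝ} :
    constantCoeff (psComp (exp ℝ) f) = 1 := by
  have := coeff_psComp (exp ℝ) f 0
  rw [coeff_zero_eq_constantCoeff] at this
  rw [this]
  simp [coeff_exp']

/-- The sum in `coeff m (psComp (exp) f)` can be extended to any range beyond `m`. -/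
lemma coeff_psComp_exp_ext {f : PowerSeries ℝ} (hf : constantCoeff f = 0) (m N : ℕ)
    (hN : m < N) :
    coeff m (psComp (exp ℝ) f) = ∑ n ∈ range N, (1 / (n.factorial : ℝ)) * coeff m (f ^ n) := by
  rw [coeff_psComp]
  rw [Finset.sum_subset (Finset.range_subset_range.mpr (show m+1 ≤ N by omega))]
  · exact Finset.sum_congr rfl fun n _ => by rw [coeff_exp']
  · intro n hn hn'
    simp only [Finset.mem_range] at hn hn'
    rw [coeff_pow_eq_zero_s10 hf (by omega), mul_zero]

lemma deriv_psComp_exp {f : PowerSeries ℝ} (hf : constantCoeff f = 0) :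
    d⁄dX ℝ (psComp (exp ℝ) f) = d⁄dX ℝ f * psComp (exp ℝ) f := by
  ext m
  rw [PowerSeries.coeff_derivative, coeff_psComp_exp_ext hf (m+1) (m+2) (by omega)]
  have hD : ∀ n : ℕ, coeff (m+1) (f ^ n) * ((m:ℝ)+1) = coeff m (d⁄dX ℝ (f ^ n)) := by
    intro n
    rw [PowerSeries.coeff_derivative]
  have hpow : ∀ n : ℕ, coeff m (d⁄dX ℝ (f ^ (n+1)))
      = ((n:ℝ)+1) * coeff m (d⁄dX ℝ f * f ^ n) := by
    intro n
    rw [Derivation.leibniz_pow, Nat.add_sub_cancel, smul_eq_mul, map_nsmul, nsmul_eq_mul,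
      mul_comm (f ^ n) _]
    push_cast
    ring
  calc (∑ n ∈ range (m+2), (1 / (n.factorial : ℝ)) * coeff (m+1) (f ^ n)) * ((m:ℝ)+1)
      = ∑ n ∈ range (m+2), (1 / (n.factorial : ℝ)) * coeff m (d⁄dX ℝ (f ^ n)) := by
        rw [Finset.sum_mul]
        refine Finset.sum_congr rfl fun n _ => ?_
        rw [mul_assoc, hD n]
    _ = ∑ j ∈ range (m+1), (1 / (j.factorial : ℝ)) * coeff m (d⁄dX ℝ f * f ^ j) := by
        rw [Finset.sum_range_succ']
        have h0 : (1 / ((0:ℕ).factorial : ℝ)) * coeff m (d⁄dX ℝ (f ^ 0)) = 0 := by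
          simp
        rw [h0, add_zero]
        refine Finset.sum_congr rfl fun j _ => ?_
        rw [hpow j, Nat.factorial_succ]
        push_cast
        have hj : (j.factorial : ℝ) ≠ 0 := Nat.cast_ne_zero.mpr (Nat.factorial_ne_zero j)
        field_simp
    _ = coeff m (d⁄dX ℝ f * psComp (exp ℝ) f) := by
        rw [PowerSeries.coeff_mul]
        have : ∀ p ∈ antidiagonal m,
            coeff p.1 (d⁄dX ℝ f) * coeff p.2 (psComp (exp ℝ) f)
              = ∑ j ∈ range (m+1), (1 / (j.factorial : ℝ)) *
                  (coeff p.1 (d⁄dX ℝ f) * coeff p.2 (f ^ j)) := by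
          intro p hp
          rw [Finset.HasAntidiagonal.mem_antidiagonal] at hp
          rw [coeff_psComp_exp_ext hf p.2 (m+1) (by omega)]
          rw [Finset.mul_sum]
          refine Finset.sum_congr rfl fun j _ => ?_
          ring
        rw [Finset.sum_congr rfl this, Finset.sum_comm]
        refine Finset.sum_congr rfl fun j _ => ?_
        rw [PowerSeries.coeff_mul, Finset.mul_sum]

lemma abel_sum (n : ℕ) (hn : 1 ≤ n) (x : ℝ) :
    ∑ b ∈ Finset.Icc 1 n, (n.choose b : ℝ) * (b:ℝ)^(b-1) * (x + ((n:ℝ) - (b:ℝ)))^(n-b)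
      = (n:ℝ) * (x + (n:ℝ))^(n-1) := by
  have h := congrArg (Polynomial.eval x) (abelP_eq n hn ((n:ℕ):ℝ))
  unfold abelP at h
  simp only [Polynomial.eval_finset_sum, Polynomial.eval_mul, Polynomial.eval_pow,
    Polynomial.eval_add, Polynomial.eval_C, Polynomial.eval_X] at h
  exact h

/-- Shifted-index version of the Abel sum, over `range`. -/
lemma abel_sum_range (j : ℕ) (x : ℝ) :
    ∑ i ∈ range (j+1), ((j+1).choose (i+1) : ℝ) * ((i+1:ℕ):ℝ)^i
        * (x + ((j-i : ℕ):ℝ))^(j-i)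
      = ((j:ℝ)+1) * (x + ((j:ℝ)+1))^j := by
  have h := abel_sum (j+1) (by omega) x
  rw [show Finset.Icc 1 (j+1) = Finset.Ico 1 (j+2) from (Finset.Ico_add_one_right_eq_Icc ..).symm,
    Finset.sum_Ico_eq_sum_range, show j+2-1 = j+1 from rfl] at h
  have hconv : ∀ i ∈ range (j+1),
      ((j+1).choose (1+i) : ℝ) * ((1+i:ℕ):ℝ)^(1+i-1) * (x + (((j+1:ℕ):ℝ) - ((1+i:ℕ):ℝ)))^(j+1-(1+i))
        = ((j+1).choose (i+1) : ℝ) * ((i+1:ℕ):ℝ)^i * (x + ((j-i : ℕ):ℝ))^(j-i) := by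
    intro i hi
    rw [Finset.mem_range] at hi
    rw [add_comm 1 i]
    rw [Nat.add_sub_cancel, Nat.succ_sub_succ]
    have e3 : ((j+1:ℕ):ℝ) - ((i+1:ℕ):ℝ) = ((j-i : ℕ):ℝ) := by
      push_cast [show i ≤ j by omega]
      ring
    rw [e3]
  rw [Finset.sum_congr rfl hconv] at h
  push_cast at h ⊢
  exact h

/-- The special sum needed for the coefficients of `T`. -/
lemma abel_sum_T (j : ℕ) :
    ∑ i ∈ range (j+1), ((j+2).choose (i+1) : ℝ) * ((i+1:ℕ):ℝ)^i
        * ((j+1-i : ℕ):ℝ)^(j+1-i)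
      = ((j:ℝ)+1) * ((j:ℝ)+2)^(j+1) := by
  have h := abel_sum_range (j+1) 0
  rw [Finset.sum_range_succ] at h
  have htop : ((j+2).choose (j+2) : ℝ) * ((j+2:ℕ):ℝ)^(j+1) * ((0:ℝ) + ((j+1-(j+1) : ℕ):ℝ))^(j+1-(j+1)) = ((j:ℝ)+2)^(j+1) := by
    simp only [Nat.choose_self, Nat.cast_one, one_mul, Nat.sub_self, pow_zero, mul_one]
    push_cast
    ring
  rw [htop] at h
  have hconv : ∀ i ∈ range (j+1),
      ((j+2).choose (i+1) : ℝ) * ((i+1:ℕ):ℝ)^i * ((0:ℝ) + ((j+1-i : ℕ):ℝ))^(j+1-i)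
        = ((j+2).choose (i+1) : ℝ) * ((i+1:ℕ):ℝ)^i * ((j+1-i : ℕ):ℝ)^(j+1-i) := by
    intro i _
    rw [zero_add]
  rw [Finset.sum_congr rfl hconv] at h
  have h2 : ((j:ℝ)+1+1) * ((0:ℝ) + ((j:ℝ)+1+1))^(j+1)
      = ((j:ℝ)+1) * ((j:ℝ)+2)^(j+1) + ((j:ℝ)+2)^(j+1) := by
    rw [zero_add]
    have : (j:ℝ)+1+1 = (j:ℝ)+2 := by ring
    rw [this]
    ring
  push_cast at h ⊢
  rw [h2] at h
  linarith

section TreeCoeff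
variable {T : PowerSeries ℝ}

lemma T_ode (hT0 : constantCoeff T = 0) (hT : T = X * psComp (PowerSeries.exp ℝ) T) :
    X * d⁄dX ℝ T = T + T * (X * d⁄dX ℝ T) := by
  have hE := deriv_psComp_exp hT0
  have h1 : d⁄dX ℝ T = X * (d⁄dX ℝ T * psComp (PowerSeries.exp ℝ) T)
      + psComp (PowerSeries.exp ℝ) T := by
    conv_lhs => rw [hT]
    rw [Derivation.leibniz, hE, smul_eq_mul, smul_eq_mul, PowerSeries.derivative_X, mul_one]
  linear_combination (X : PowerSeries ℝ) * h1 - (1 + X * d⁄dX ℝ T) * hT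

lemma coeff_X_mul_deriv (F : PowerSeries ℝ) (i : ℕ) :
    coeff i (X * d⁄dX ℝ F) = (i : ℝ) * coeff i F := by
  cases i with
  | zero => simp
  | succ i =>
      rw [PowerSeries.coeff_succ_X_mul, PowerSeries.coeff_derivative]
      push_cast
      ring

lemma coeff_T_eq (hT0 : constantCoeff T = 0) (hT : T = X * psComp (PowerSeries.exp ℝ) T) :
    ∀ n, 1 ≤ n → coeff n T = (n:ℝ)^(n-1) / (n.factorial : ℝ) := by
  have hode := T_ode hT0 hT
  intro n
  induction n using Nat.strong_induction_on with
  | _ n ih =>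
    intro hn
    match n, hn with
    | 1, _ =>
        have h := congrArg (coeff 1) hT
        rw [show (1:ℕ) = 0 + 1 from rfl, PowerSeries.coeff_succ_X_mul,
          coeff_zero_eq_constantCoeff, constantCoeff_psComp_exp] at h
        rw [h]
        norm_num
    | (j+2), _ =>
        have key := congrArg (coeff (j+2)) hode
        rw [map_add, coeff_X_mul_deriv, PowerSeries.coeff_mul] at key
        have hinner : ∀ p ∈ Finset.HasAntidiagonal.antidiagonal (j+2),
            coeff p.1 T * coeff p.2 (X * d⁄dX ℝ T)
              = coeff p.1 T * ((p.2 : ℝ) * coeff p.2 T) := by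
          intro p _
          rw [coeff_X_mul_deriv]
        rw [Finset.sum_congr rfl hinner,
          Finset.Nat.sum_antidiagonal_eq_sum_range_succ_mk] at key
        have hsum : ∑ i ∈ range (j+2+1),
            coeff i T * (((j+2-i : ℕ) : ℝ) * coeff (j+2-i) T)
              = ((j:ℝ)+1) * ((j:ℝ)+2)^(j+1) / ((j+2).factorial : ℝ) := by
          rw [Finset.sum_range_succ, Finset.sum_range_succ']
          have htop : coeff (j+2) T * (((j+2-(j+2) : ℕ) : ℝ) * coeff (j+2-(j+2)) T) = 0 := by
            simp
          have hbot : coeff 0 T * (((j+2-0 : ℕ) : ℝ) * coeff (j+2-0) T) = 0 := by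
            rw [coeff_zero_eq_constantCoeff, hT0, zero_mul]
          rw [htop, hbot, add_zero, add_zero]
          have hterm : ∀ i ∈ range (j+1),
              coeff (i+1) T * (((j+2-(i+1) : ℕ) : ℝ) * coeff (j+2-(i+1)) T)
                = ((j+2).choose (i+1) : ℝ) * ((i+1 : ℕ):ℝ)^i
                    * (((j+1-i : ℕ)):ℝ)^(j+1-i) / ((j+2).factorial : ℝ) := by
            intro i hi
            rw [Finset.mem_range] at hi
            have e1 : j+2-(i+1) = j+1-i := by omega
            rw [e1]
            have h2 : coeff (i+1) T = ((i+1 : ℕ):ℝ)^i / (((i+1).factorial : ℕ) : ℝ) := by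
              have := ih (i+1) (by omega) (by omega)
              rwa [Nat.add_sub_cancel] at this
            have h3 : coeff (j+1-i) T
                = ((j+1-i : ℕ):ℝ)^(j-i) / (((j+1-i).factorial : ℕ) : ℝ) := by
              have := ih (j+1-i) (by omega) (by omega)
              have e2 : j+1-i-1 = j-i := by omega
              rwa [e2] at this
            have hfac : ((j+2).choose (i+1) : ℝ) * (((i+1).factorial : ℕ) : ℝ)
                * (((j+1-i).factorial : ℕ) : ℝ) = (((j+2).factorial : ℕ) : ℝ) := by
              have h4 := Nat.choose_mul_factorial_mul_factorial (show i+1 ≤ j+2 by omega)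
              rw [e1] at h4
              exact_mod_cast h4
            have hpow : ((j+1-i : ℕ):ℝ) * ((j+1-i : ℕ):ℝ)^(j-i)
                = ((j+1-i : ℕ):ℝ)^(j+1-i) := by
              rw [← pow_succ']
              congr 1
              omega
            have hf1 : (((i+1).factorial : ℕ) : ℝ) ≠ 0 :=
              Nat.cast_ne_zero.mpr (Nat.factorial_ne_zero _)
            have hf2 : (((j+1-i).factorial : ℕ) : ℝ) ≠ 0 :=
              Nat.cast_ne_zero.mpr (Nat.factorial_ne_zero _)
            have hC : ((j+2).choose (i+1) : ℝ) ≠ 0 := by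
              have := Nat.choose_pos (show i+1 ≤ j+2 by omega)
              positivity
            calc coeff (i+1) T * (((j+1-i : ℕ) : ℝ) * coeff (j+1-i) T)
                = (((i+1 : ℕ):ℝ)^i * ((j+1-i : ℕ):ℝ)^(j+1-i))
                    / ((((i+1).factorial : ℕ) : ℝ) * (((j+1-i).factorial : ℕ) : ℝ)) := by
                  rw [h2, h3, ← hpow]
                  field_simp
              _ = ((j+2).choose (i+1) : ℝ) * ((i+1 : ℕ):ℝ)^i
                    * (((j+1-i : ℕ)):ℝ)^(j+1-i) / ((j+2).factorial : ℝ) := by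
                  rw [← hfac]
                  field_simp
          rw [Finset.sum_congr rfl hterm, ← Finset.sum_div, abel_sum_T]
        rw [hsum] at key
        -- key : (j+2) * t = t + (j+1)(j+2)^(j+1)/(j+2)!
        have hf3 : (((j+2).factorial : ℕ) : ℝ) ≠ 0 :=
          Nat.cast_ne_zero.mpr (Nat.factorial_ne_zero _)
        have hj1 : ((j:ℝ)+1) ≠ 0 := by positivity
        rw [show j+2-1 = j+1 from rfl]
        push_cast at key ⊢
        have key2 : ((j:ℝ)+1) * coeff (j+2) T
            = ((j:ℝ)+1) * (((j:ℝ)+2)^(j+1) / ((j+2).factorial : ℝ)) := by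
          field_simp at key ⊢
          exact mul_left_cancel₀ hj1 (by linear_combination key)
        have := mul_left_cancel₀ hj1 key2
        rw [this]
end TreeCoeff

section EkCoeff
variable {T : PowerSeries ℝ} {k : ℝ}

lemma Ek_ode (hT0 : constantCoeff T = 0) (hT : T = X * psComp (PowerSeries.exp ℝ) T) :
    X * d⁄dX ℝ (psComp (PowerSeries.exp ℝ) (k • T))
      = PowerSeries.C k * (T * psComp (PowerSeries.exp ℝ) (k • T))
        + T * (X * d⁄dX ℝ (psComp (PowerSeries.exp ℝ) (k • T))) := by
  have h0 : constantCoeff (k • T) = 0 := by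
    rw [PowerSeries.smul_eq_C_mul, map_mul, PowerSeries.constantCoeff_C, hT0, mul_zero]
  have h2 := deriv_psComp_exp h0
  have h1 : d⁄dX ℝ (k • T) = PowerSeries.C k * d⁄dX ℝ T := by
    rw [PowerSeries.smul_eq_C_mul, Derivation.leibniz, PowerSeries.derivative_C, smul_zero,
      add_zero, smul_eq_mul]
  have hode := T_ode hT0 hT
  rw [h1] at h2
  linear_combination ((X : PowerSeries ℝ) - T * X) * h2
    + (PowerSeries.C k * psComp (PowerSeries.exp ℝ) (k • T)) * hode

lemma Ek_coeff_key (hT0 : constantCoeff T = 0)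
    (hT : T = X * psComp (PowerSeries.exp ℝ) T) :
    ∀ n : ℕ, ((n:ℝ) + k) * coeff n (psComp (PowerSeries.exp ℝ) (k • T))
      = k * ((n:ℝ) + k)^n / (n.factorial : ℝ) := by
  have hode := Ek_ode (k := k) hT0 hT
  intro n
  induction n using Nat.strong_induction_on with
  | _ n ih =>
    match n with
    | 0 =>
        rw [coeff_zero_eq_constantCoeff, constantCoeff_psComp_exp]
        norm_num
    | (j+1) =>
        set Ek := psComp (PowerSeries.exp ℝ) (k • T) with hEk
        have key := congrArg (coeff (j+1)) hode
        rw [map_add, coeff_X_mul_deriv, PowerSeries.coeff_C_mul, PowerSeries.coeff_mul,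
          PowerSeries.coeff_mul, Finset.mul_sum, ← Finset.sum_add_distrib] at key
        have hinner : ∀ p ∈ Finset.HasAntidiagonal.antidiagonal (j+1),
            k * (coeff p.1 T * coeff p.2 Ek)
              + coeff p.1 T * coeff p.2 (X * d⁄dX ℝ Ek)
            = coeff p.1 T * (((p.2:ℝ) + k) * coeff p.2 Ek) := by
          intro p _
          rw [coeff_X_mul_deriv]
          ring
        rw [Finset.sum_congr rfl hinner,
          Finset.Nat.sum_antidiagonal_eq_sum_range_succ_mk,
          Finset.sum_range_succ'] at key
        have hbot : coeff 0 T * ((((j+1-0 : ℕ):ℝ) + k) * coeff (j+1-0) Ek) = 0 := by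
          rw [coeff_zero_eq_constantCoeff, hT0, zero_mul]
        rw [hbot, add_zero] at key
        have hterm : ∀ i ∈ range (j+1),
            coeff (i+1) T * ((((j+1-(i+1) : ℕ):ℝ) + k) * coeff (j+1-(i+1)) Ek)
              = k * (((j+1).choose (i+1) : ℝ) * ((i+1 : ℕ):ℝ)^i
                  * (k + ((j-i : ℕ):ℝ))^(j-i)) / ((j+1).factorial : ℝ) := by
          intro i hi
          rw [Finset.mem_range] at hi
          have e1 : j+1-(i+1) = j-i := by omega
          rw [e1]
          have h2 : coeff (i+1) T = ((i+1 : ℕ):ℝ)^i / (((i+1).factorial : ℕ) : ℝ) := by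
            have := coeff_T_eq hT0 hT (i+1) (by omega)
            rwa [Nat.add_sub_cancel] at this
          have hIH : (((j-i : ℕ):ℝ) + k) * coeff (j-i) Ek
              = k * (((j-i : ℕ):ℝ) + k)^(j-i) / ((j-i).factorial : ℝ) := ih (j-i) (by omega)
          have hfac : (((j+1).choose (i+1) : ℕ) : ℝ) * (((i+1).factorial : ℕ) : ℝ)
              * (((j-i).factorial : ℕ) : ℝ) = (((j+1).factorial : ℕ) : ℝ) := by
            have h4 := Nat.choose_mul_factorial_mul_factorial (show i+1 ≤ j+1 by omega)
            rw [e1] at h4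
            exact_mod_cast h4
          have hf1 : (((i+1).factorial : ℕ) : ℝ) ≠ 0 :=
            Nat.cast_ne_zero.mpr (Nat.factorial_ne_zero _)
          have hf2 : (((j-i).factorial : ℕ) : ℝ) ≠ 0 :=
            Nat.cast_ne_zero.mpr (Nat.factorial_ne_zero _)
          have hC : (((j+1).choose (i+1) : ℕ) : ℝ) ≠ 0 := by
            have := Nat.choose_pos (show i+1 ≤ j+1 by omega)
            positivity
          rw [h2, hIH, show (k + ((j-i : ℕ):ℝ)) = (((j-i : ℕ):ℝ) + k) from by ring, ← hfac]
          field_simp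
        rw [Finset.sum_congr rfl hterm] at key
        have hsumval : ∑ i ∈ range (j+1),
            k * (((j+1).choose (i+1) : ℝ) * ((i+1 : ℕ):ℝ)^i
                  * (k + ((j-i : ℕ):ℝ))^(j-i)) / ((j+1).factorial : ℝ)
              = k * (((j:ℝ)+1) * (k + ((j:ℝ)+1))^j) / ((j+1).factorial : ℝ) := by
          rw [← Finset.sum_div, ← Finset.mul_sum, abel_sum_range j k]
        rw [hsumval] at key
        -- key : (↑(j+1)) * e = k * ((j+1)(k+j+1)^j)/(j+1)!
        have hf3 : (((j+1).factorial : ℕ) : ℝ) ≠ 0 :=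
          Nat.cast_ne_zero.mpr (Nat.factorial_ne_zero _)
        have hj1 : ((j:ℝ)+1) ≠ 0 := by positivity
        push_cast at key ⊢
        have he : coeff (j+1) Ek = k * (k + ((j:ℝ)+1))^j / ((j+1).factorial : ℝ) := by
          have key2 : ((j:ℝ)+1) * coeff (j+1) Ek
              = ((j:ℝ)+1) * (k * (k + ((j:ℝ)+1))^j / ((j+1).factorial : ℝ)) := by
            rw [key]
            field_simp
          exact mul_left_cancel₀ hj1 key2
        rw [he, pow_succ]
        field_simp
        ring
end EkCoeff

section Final
variable {T : PowerSeries ℝ} {k : ℝ}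

lemma ode_inj (hk : 0 < k) {F G : PowerSeries ℝ}
    (h : X * d⁄dX ℝ F + k • F = X * d⁄dX ℝ G + k • G) : F = G := by
  ext n
  have hc := congrArg (coeff n) h
  rw [map_add, map_add, coeff_X_mul_deriv, coeff_X_mul_deriv, map_smul, map_smul,
    smul_eq_mul, smul_eq_mul] at hc
  have hnk : ((n:ℝ) + k) ≠ 0 := by positivity
  have h2 : ((n:ℝ) + k) * coeff n F = ((n:ℝ) + k) * coeff n G := by linarith
  exact mul_left_cancel₀ hnk h2

/-- The family of series `F_l = ∑ (n+k)^{n-l} x^n/n!`. -/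
noncomputable def Fser (k : ℝ) (l : ℕ) : PowerSeries ℝ :=
  PowerSeries.mk fun n => ((n : ℝ) + k) ^ ((n : ℤ) - (l : ℤ)) / (n.factorial : ℝ)

lemma F_step (hk : 0 < k) (l : ℕ) :
    X * d⁄dX ℝ (Fser k (l+1)) + k • Fser k (l+1) = Fser k l := by
  ext n
  rw [map_add, coeff_X_mul_deriv, map_smul, smul_eq_mul, Fser, Fser, coeff_mk, coeff_mk]
  have hx : ((n:ℝ)+k) ≠ 0 := by positivity
  have hz : ((n:ℝ)+k)^((n:ℤ)-(l:ℤ)) = ((n:ℝ)+k)^((n:ℤ)-((l+1:ℕ):ℤ)) * ((n:ℝ)+k) := by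
    rw [← zpow_add_one₀ hx]
    congr 1
    push_cast
    ring
  rw [hz]
  ring

lemma dEk (hT0 : constantCoeff T = 0) (hT : T = X * psComp (PowerSeries.exp ℝ) T) :
    d⁄dX ℝ (psComp (PowerSeries.exp ℝ) (k • T))
      = PowerSeries.C k * d⁄dX ℝ T * psComp (PowerSeries.exp ℝ) (k • T) := by
  have h0 : constantCoeff (k • T) = 0 := by
    rw [PowerSeries.smul_eq_C_mul, map_mul, PowerSeries.constantCoeff_C, hT0, mul_zero]
  have h2 := deriv_psComp_exp h0
  have h1 : d⁄dX ℝ (k • T) = PowerSeries.C k * d⁄dX ℝ T := by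
    rw [PowerSeries.smul_eq_C_mul, Derivation.leibniz, PowerSeries.derivative_C, smul_zero,
      add_zero, smul_eq_mul]
  rw [h2, h1]

lemma Ek_coeff_succ (hT0 : constantCoeff T = 0)
    (hT : T = X * psComp (PowerSeries.exp ℝ) T) (hk : 0 < k) (j : ℕ) :
    coeff (j+1) (psComp (PowerSeries.exp ℝ) (k • T))
      = k * (((j+1:ℕ):ℝ) + k)^j / (((j+1).factorial : ℕ) : ℝ) := by
  have h := Ek_coeff_key (k := k) hT0 hT (j+1)
  have hx : (((j+1:ℕ):ℝ) + k) ≠ 0 := by positivity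
  refine mul_left_cancel₀ hx ?_
  rw [h, pow_succ]
  ring

lemma deriv_aeval (q : Polynomial ℝ) :
    d⁄dX ℝ (Polynomial.aeval T q)
      = Polynomial.aeval T (Polynomial.derivative q) * d⁄dX ℝ T := by
  induction q using Polynomial.induction_on' with
  | add p q hp hq => simp [hp, hq, add_mul]
  | monomial i a =>
      rw [Polynomial.aeval_monomial, Polynomial.derivative_monomial, Polynomial.aeval_monomial]
      have hA : algebraMap ℝ (PowerSeries ℝ) a = PowerSeries.C a := by
        rw [PowerSeries.algebraMap_apply]
        simp
      have hA2 : algebraMap ℝ (PowerSeries ℝ) (a * (i:ℝ)) = PowerSeries.C (a * i) := by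
        rw [PowerSeries.algebraMap_apply]
        simp
      rw [hA, hA2, Derivation.leibniz, PowerSeries.derivative_C, smul_zero, add_zero,
        smul_eq_mul]
      cases i with
      | zero => simp
      | succ i =>
          rw [Derivation.leibniz_pow, smul_eq_mul, nsmul_eq_mul, map_mul, map_natCast]
          simp only [Nat.add_sub_cancel]
          ring

lemma step_ps (hT0 : constantCoeff T = 0)
    (hT : T = X * psComp (PowerSeries.exp ℝ) T) (hk : 0 < k) (p q : Polynomial ℝ)
    (hpq : k • q + Polynomial.X * Polynomial.derivative q = (1 - Polynomial.X) * p) :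
    X * d⁄dX ℝ (psComp (PowerSeries.exp ℝ) (k • T) * Polynomial.aeval T q)
      + k • (psComp (PowerSeries.exp ℝ) (k • T) * Polynomial.aeval T q)
      = psComp (PowerSeries.exp ℝ) (k • T) * Polynomial.aeval T p := by
  set E := psComp (PowerSeries.exp ℝ) (k • T) with hE
  set Q := Polynomial.aeval T q with hQ
  set Q' := Polynomial.aeval T (Polynomial.derivative q) with hQ'
  set P := Polynomial.aeval T p with hP
  have h1 : d⁄dX ℝ E = PowerSeries.C k * d⁄dX ℝ T * E := dEk hT0 hT
  have h2 : d⁄dX ℝ Q = Q' * d⁄dX ℝ T := deriv_aeval q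
  have hode := T_ode hT0 hT
  have haeval : PowerSeries.C k * Q + T * Q' = (1 - T) * P := by
    have := congrArg (Polynomial.aeval T) hpq
    rw [map_add, map_smul, map_mul, map_mul, map_sub, map_one, Polynomial.aeval_X,
      PowerSeries.smul_eq_C_mul] at this
    exact this
  have hunit : (1 - T : PowerSeries ℝ) ≠ 0 := by
    intro hcontra
    have := congrArg (constantCoeff) hcontra
    rw [map_sub, map_one, hT0, sub_zero] at this
    exact one_ne_zero this
  refine mul_left_cancel₀ hunit ?_
  rw [Derivation.leibniz, smul_eq_mul, smul_eq_mul, PowerSeries.smul_eq_C_mul, h1, h2]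
  linear_combination (E * (Q' + PowerSeries.C k * Q)) * hode + E * haeval

noncomputable def qnext (k : ℝ) (l : ℕ) (p : Polynomial ℝ) : Polynomial ℝ :=
  ∑ j ∈ range (l+1), Polynomial.C
    ((p.coeff j - if j = 0 then 0 else p.coeff (j-1))/(k + (j:ℝ))) * Polynomial.X ^ j

lemma qnext_coeff (k : ℝ) (l : ℕ) (p : Polynomial ℝ) (j : ℕ) (hj : j ≤ l) :
    (qnext k l p).coeff j
      = (p.coeff j - if j = 0 then 0 else p.coeff (j-1))/(k + (j:ℝ)) := by
  rw [qnext, Polynomial.finset_sum_coeff]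
  simp only [Polynomial.coeff_C_mul, Polynomial.coeff_X_pow]
  rw [Finset.sum_eq_single j (fun b _ hb => by simp [Ne.symm hb])
    (fun h => absurd (Finset.mem_range.mpr (by omega)) h)]
  simp

lemma qnext_coeff_gt (k : ℝ) (l : ℕ) (p : Polynomial ℝ) (j : ℕ) (hj : l < j) :
    (qnext k l p).coeff j = 0 := by
  rw [qnext, Polynomial.finset_sum_coeff]
  refine Finset.sum_eq_zero fun i hi => ?_
  rw [Finset.mem_range] at hi
  simp only [Polynomial.coeff_C_mul, Polynomial.coeff_X_pow]
  rw [if_neg (show ¬ j = i by omega), mul_zero]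

lemma qnext_spec {k : ℝ} (hk : 0 < k) (l : ℕ) (hl : 1 ≤ l) (p : Polynomial ℝ)
    (hp : p.degree = ((l-1 : ℕ) : WithBot ℕ)) :
    k • qnext k l p + Polynomial.X * Polynomial.derivative (qnext k l p)
      = (1 - Polynomial.X) * p := by
  have hpz : ∀ m, l-1 < m → p.coeff m = 0 := fun m hm =>
    Polynomial.coeff_eq_zero_of_degree_lt (by rw [hp]; exact_mod_cast hm)
  ext j
  rw [Polynomial.coeff_add, Polynomial.coeff_smul, smul_eq_mul, sub_mul, one_mul,
    Polynomial.coeff_sub]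
  cases j with
  | zero =>
      rw [Polynomial.mul_coeff_zero, Polynomial.coeff_X_zero, zero_mul,
        Polynomial.mul_coeff_zero, Polynomial.coeff_X_zero, zero_mul,
        qnext_coeff k l p 0 (by omega)]
      simp only [if_pos rfl, Nat.cast_zero, add_zero, sub_zero]
      field_simp
      simp
  | succ j =>
      rw [Polynomial.coeff_X_mul, Polynomial.coeff_X_mul, Polynomial.coeff_derivative]
      rcases Nat.lt_or_ge l (j+1) with h | h
      · rw [qnext_coeff_gt k l p (j+1) h, hpz (j+1) (by omega), hpz j (by omega)]
        simp
      · rw [qnext_coeff k l p (j+1) h]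
        simp only [Nat.succ_ne_zero, if_neg, Nat.add_sub_cancel]
        have hnz : k + ((j+1:ℕ):ℝ) ≠ 0 := by positivity
        push_cast at hnz ⊢
        field_simp

lemma qnext_degree {k : ℝ} (hk : 0 < k) {l : ℕ} (hl : 1 ≤ l) {p : Polynomial ℝ}
    (hp : p.degree = ((l-1 : ℕ) : WithBot ℕ)) :
    (qnext k l p).degree = (l : ℕ) := by
  apply Polynomial.degree_eq_of_le_of_coeff_ne_zero
  · refine (Polynomial.degree_sum_le _ _).trans ?_
    refine Finset.sup_le fun i hi => ?_
    rw [Finset.mem_range] at hi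
    refine (Polynomial.degree_mul_le _ _).trans ?_
    refine le_trans (add_le_add Polynomial.degree_C_le (le_of_eq (Polynomial.degree_X_pow i))) ?_
    rw [zero_add]
    exact_mod_cast Nat.cast_le.mpr (by omega)
  · rw [qnext_coeff k l p l le_rfl, if_neg (by omega)]
    have h1 : p.coeff l = 0 := Polynomial.coeff_eq_zero_of_degree_lt (by rw [hp]; exact_mod_cast (by omega : l-1 < l))
    have h2 : p.coeff (l-1) ≠ 0 := Polynomial.coeff_ne_zero_of_eq_degree hp
    rw [h1, zero_sub]
    have hnz : k + (l:ℝ) ≠ 0 := by positivity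
    exact div_ne_zero (neg_ne_zero.mpr h2) hnz

lemma base_case {T : PowerSeries ℝ} {k : ℝ} (hT0 : constantCoeff T = 0)
    (hT : T = X * psComp (PowerSeries.exp ℝ) T) (hk : 0 < k) :
    Fser k 1 = psComp (PowerSeries.exp ℝ) (k • T)
      * Polynomial.aeval T (Polynomial.C (1/k)) := by
  have hC : Polynomial.aeval T (Polynomial.C (1/k)) = PowerSeries.C (1/k) := by
    rw [Polynomial.aeval_C, PowerSeries.algebraMap_apply]
    simp
  rw [hC]
  ext n
  rw [Fser, coeff_mk, mul_comm, PowerSeries.coeff_C_mul]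
  cases n with
  | zero =>
      rw [coeff_zero_eq_constantCoeff, constantCoeff_psComp_exp]
      have e1 : ((0:ℕ):ℝ) + k = k := by norm_num
      have e2 : ((0:ℕ):ℤ) - ((1:ℕ):ℤ) = -1 := by norm_num
      rw [e1, e2, zpow_neg, zpow_one]
      norm_num
  | succ j =>
      rw [Ek_coeff_succ hT0 hT hk j]
      have e1 : (((j+1):ℕ):ℤ) - ((1:ℕ):ℤ) = (j:ℤ) := by push_cast; ring
      rw [e1, zpow_natCast]
      have hknz : k ≠ 0 := ne_of_gt hk
      field_simp


/-- Let `T` be the tree function over `ℝ`, the unique power series with zero constant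
term satisfying `T = x·exp(T)`.  For every positive integer `l` and positive real `k`
there is a real polynomial `p` of degree exactly `l − 1` with
`∑_{n≥0} (n+k)^{n−l} xⁿ/n! = exp(k·T)·p(T)`. -/
theorem tree_function_negative_powers (T : PowerSeries ℝ)
    (hT0 : constantCoeff T = 0) (hT : T = X * psComp (PowerSeries.exp ℝ) T)
    (l : ℕ) (hl : 1 ≤ l) (k : ℝ) (hk : 0 < k) :
    ∃ p : Polynomial ℝ, p.degree = (l - 1 : ℕ) ∧
      (PowerSeries.mk fun n => ((n : ℝ) + k) ^ ((n : ℤ) - (l : ℤ)) / (n.factorial : ℝ)) =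
        psComp (PowerSeries.exp ℝ) (k • T) * Polynomial.aeval T p := by
  suffices h : ∀ l, 1 ≤ l → ∃ p : Polynomial ℝ, p.degree = ((l-1 : ℕ) : WithBot ℕ) ∧
      Fser k l = psComp (PowerSeries.exp ℝ) (k • T) * Polynomial.aeval T p by
    obtain ⟨p, h1, h2⟩ := h l hl
    exact ⟨p, h1, h2⟩
  intro l hl
  induction l, hl using Nat.le_induction with
  | base =>
      refine ⟨Polynomial.C (1/k), ?_, base_case hT0 hT hk⟩
      rw [Polynomial.degree_C (by positivity : (1:ℝ)/k ≠ 0)]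
      rfl
  | succ l hl ih =>
      obtain ⟨p, hdeg, hFl⟩ := ih
      refine ⟨qnext k l p, ?_, ?_⟩
      · rw [qnext_degree hk hl hdeg]
        norm_num
      · apply ode_inj hk
        rw [F_step hk l, step_ps hT0 hT hk p (qnext k l p) (qnext_spec hk l hl p hdeg), hFl]
end Final
end

section
/- (Abel's identity.) For every integer n ≥ 0 and all real numbers x and y, (x+y)^n = y^n + Σ_{i=1}^{n} C(n,i) · x · (x+i)^{i−1} · (y−i)^{n−i}, where C(n,i) is the ordinary binomial coefficient. -/
lemma abel_key1 (m d : ℕ) (x : ℝ) :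
    ∑ i ∈ Finset.range (m+2), (-1:ℝ)^i * ((m+1).choose i) * (x+i)^d
  = (∑ i ∈ Finset.range (m+1), (-1:ℝ)^i * (m.choose i) * (x+i)^d)
    - ∑ i ∈ Finset.range (m+1), (-1:ℝ)^i * (m.choose i) * (x+1+i)^d := by
  rw [Finset.sum_range_succ' (fun i => (-1:ℝ)^i * ((m+1).choose i) * (x+i)^d) (m+1),
      Finset.sum_range_succ' (fun i => (-1:ℝ)^i * (m.choose i) * (x+i)^d) m]
  simp only [Nat.choose_succ_succ, Nat.cast_add, Nat.choose_zero_right, Nat.cast_one,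
    pow_zero, one_mul, Nat.cast_zero, add_zero, mul_add, add_mul]
  rw [Finset.sum_add_distrib]
  rw [Finset.sum_range_succ (fun i => (-1:ℝ)^(i+1) * (m.choose i.succ) * (x+((i:ℝ)+1))^d)]
  simp only [Nat.choose_succ_self, Nat.cast_zero, zero_mul, mul_zero, add_zero]
  have h1 : ∀ i ∈ Finset.range (m+1),
      (-1:ℝ)^(i+1) * (m.choose i) * (x+((i:ℝ)+1))^d
      = -((-1:ℝ)^i * (m.choose i) * (x+1+i)^d) := by
      intro i _; ring
  rw [Finset.sum_congr rfl h1, Finset.sum_neg_distrib]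
  ring

lemma abel_vanish : ∀ d n : ℕ, ∀ x : ℝ, d < n →
    ∑ i ∈ Finset.range (n+1), (-1:ℝ)^i * (n.choose i) * (x+i)^d = 0 := by
  intro d
  induction d using Nat.strong_induction_on with
  | _ d ih =>
    intro n x hdn
    obtain ⟨m, rfl⟩ : ∃ m, n = m+1 := ⟨n-1, by omega⟩
    rw [abel_key1, ← Finset.sum_sub_distrib]
    have h1 : ∀ i ∈ Finset.range (m+1),
        (-1:ℝ)^i * (m.choose i) * (x+i)^d - (-1:ℝ)^i * (m.choose i) * (x+1+i)^d
        = ∑ j ∈ Finset.range d, -(((d.choose j : ℝ)) * ((-1:ℝ)^i * (m.choose i) * (x+i)^j)) := by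
      intro i _
      have hb : (x+1+(i:ℝ))^d
          = (∑ j ∈ Finset.range d, (x+(i:ℝ))^j * (d.choose j)) + (x+(i:ℝ))^d := by
        have h : (x+1+(i:ℝ)) = (x+(i:ℝ)) + 1 := by ring
        rw [h, add_pow, Finset.sum_range_succ]
        simp
      rw [hb, mul_add, Finset.mul_sum, Finset.sum_neg_distrib,
        sub_add_eq_sub_sub, sub_right_comm, sub_self, zero_sub, neg_inj]
      exact Finset.sum_congr rfl (fun j _ => by ring)
    rw [Finset.sum_congr rfl h1, Finset.sum_comm]
    apply Finset.sum_eq_zero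
    intro j hj
    have hjd : j < d := Finset.mem_range.mp hj
    have h0 : ∑ i ∈ Finset.range (m+1), (-1:ℝ)^i * (m.choose i) * (x+i)^j = 0 :=
      ih j hjd m x (by omega)
    calc ∑ i ∈ Finset.range (m+1), -(((d.choose j : ℝ)) * ((-1:ℝ)^i * (m.choose i) * (x+i)^j))
        = -(((d.choose j : ℝ)) * ∑ i ∈ Finset.range (m+1), (-1:ℝ)^i * (m.choose i) * (x+i)^j) := by
          rw [Finset.mul_sum, Finset.sum_neg_distrib]
      _ = 0 := by rw [h0]; ring

/-- Abel's identity: for every `n ≥ 0` and all real `x`, `y`,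
`(x+y)ⁿ = yⁿ + ∑_{i=1}^{n} C(n,i)·x·(x+i)^{i−1}·(y−i)^{n−i}`. -/
theorem abel_identity (n : ℕ) (x y : ℝ) :
    (x + y) ^ n =
      y ^ n + ∑ i ∈ Finset.Icc 1 n,
        (n.choose i : ℝ) * x * (x + (i : ℝ)) ^ (i - 1) * (y - (i : ℝ)) ^ (n - i) := by
  induction n generalizing y with
  | zero => simp
  | succ n ih =>
    -- derivative of the Abel sum
    have hFd : ∀ z : ℝ, HasDerivAt (fun w : ℝ => w ^ (n+1) + ∑ i ∈ Finset.Icc 1 (n+1),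
        ((n+1).choose i : ℝ) * x * (x + (i : ℝ)) ^ (i - 1) * (w - (i : ℝ)) ^ (n+1-i))
        (((n:ℝ)+1) * (x+z)^n) z := by
      intro z
      have h1 : HasDerivAt (fun w : ℝ => w ^ (n+1)) (((n+1:ℕ):ℝ) * z ^ (n+1-1)) z :=
        hasDerivAt_pow (n+1) z
      have hsum : HasDerivAt (fun w : ℝ => ∑ i ∈ Finset.Icc 1 (n+1),
          ((n+1).choose i : ℝ) * x * (x + (i : ℝ)) ^ (i - 1) * (w - (i : ℝ)) ^ (n+1-i))
          (∑ i ∈ Finset.Icc 1 (n+1),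
            ((n+1).choose i : ℝ) * x * (x + (i : ℝ)) ^ (i - 1) *
              (((n+1-i:ℕ):ℝ) * (z - (i : ℝ)) ^ (n+1-i-1) * 1)) z := by
        apply HasDerivAt.fun_sum
        intro i _
        exact HasDerivAt.const_mul _ (((hasDerivAt_id z).sub_const ((i:ℝ))).pow (n := n+1-i))
      have h2 := h1.add hsum
      have heq : ((n+1:ℕ):ℝ) * z ^ (n+1-1) + ∑ i ∈ Finset.Icc 1 (n+1),
            ((n+1).choose i : ℝ) * x * (x + (i : ℝ)) ^ (i - 1) *
              (((n+1-i:ℕ):ℝ) * (z - (i : ℝ)) ^ (n+1-i-1) * 1)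
          = ((n:ℝ)+1) * (x+z)^n := by
        rw [ih z, Finset.sum_Icc_succ_top (by omega : 1 ≤ n+1)]
        simp only [Nat.sub_self, Nat.cast_zero, zero_mul, mul_zero, add_zero,
          Nat.add_sub_cancel, zero_mul, mul_one]
        have hterm : ∀ i ∈ Finset.Icc 1 n,
            ((n+1).choose i : ℝ) * x * (x + (i : ℝ)) ^ (i - 1) *
              (((n+1-i:ℕ):ℝ) * (z - (i : ℝ)) ^ (n+1-i-1))
            = ((n:ℝ)+1) * ((n.choose i : ℝ) * x * (x + (i : ℝ)) ^ (i - 1) *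
                (z - (i : ℝ)) ^ (n-i)) := by
          intro i hi
          rw [Finset.mem_Icc] at hi
          have he : n+1-i-1 = n-i := by omega
          have hcc : ((n+1).choose i : ℝ) * ((n+1-i : ℕ):ℝ)
              = ((n:ℝ)+1) * (n.choose i : ℝ) := by
            have h := Nat.choose_mul_succ_eq n i
            have h' : ((n.choose i * (n+1) : ℕ) : ℝ) = (((n+1).choose i * (n+1-i) : ℕ) : ℝ) := by
              exact_mod_cast congrArg Nat.cast h
            push_cast at h'
            push_cast
            linarith
          rw [he]
          linear_combination (x * (x + (i:ℝ)) ^ (i-1) * (z - (i:ℝ)) ^ (n-i)) * hcc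
        rw [Finset.sum_congr rfl hterm, ← Finset.mul_sum]
        push_cast
        ring
      exact heq ▸ h2
    -- derivative of (x+·)^(n+1)
    have hGd : ∀ z : ℝ, HasDerivAt (fun w : ℝ => (x+w)^(n+1)) (((n:ℝ)+1) * (x+z)^n) z := by
      intro z
      have := ((hasDerivAt_id z).const_add x).fun_pow (n := n+1)
      simpa using this
    -- the difference is constant
    have hdiff : Differentiable ℝ (fun w : ℝ => (w ^ (n+1) + ∑ i ∈ Finset.Icc 1 (n+1),
        ((n+1).choose i : ℝ) * x * (x + (i : ℝ)) ^ (i - 1) * (w - (i : ℝ)) ^ (n+1-i))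
          - (x+w)^(n+1)) := fun t => ((hFd t).sub (hGd t)).differentiableAt
    have hzero : ∀ t : ℝ, deriv (fun w : ℝ => (w ^ (n+1) + ∑ i ∈ Finset.Icc 1 (n+1),
        ((n+1).choose i : ℝ) * x * (x + (i : ℝ)) ^ (i - 1) * (w - (i : ℝ)) ^ (n+1-i))
          - (x+w)^(n+1)) t = 0 := by
      intro t
      rw [((hFd t).fun_sub (hGd t)).deriv]
      ring
    have hconst := is_const_of_deriv_eq_zero hdiff hzero y (-x)
    -- value at y = -x is zero
    have hv := abel_vanish n (n+1) x (by omega)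
    rw [Finset.range_eq_Ico, Finset.sum_eq_sum_Ico_succ_bot (by omega : 0 < n+1+1),
      Finset.Ico_add_one_right_eq_Icc] at hv
    norm_num at hv
    have hterm2 : ∀ i ∈ Finset.Icc 1 (n+1),
        ((n+1).choose i : ℝ) * x * (x + (i : ℝ)) ^ (i - 1) * ((-x) - (i : ℝ)) ^ (n+1-i)
        = (-1:ℝ)^(n+1) * x * ((-1:ℝ)^i * (((n+1).choose i : ℕ) : ℝ) * (x + (i:ℝ))^n) := by
      intro i hi
      rw [Finset.mem_Icc] at hi
      have h3 : ((-x) - (i:ℝ)) = -(x + (i:ℝ)) := by ring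
      rw [h3, neg_pow]
      have h4 : (x + (i:ℝ))^(i-1) * (x + (i:ℝ))^(n+1-i) = (x + (i:ℝ))^n := by
        rw [← pow_add]; congr 1; omega
      have hs : ((-1:ℝ))^(n+1-i) = (-1:ℝ)^(n+1) * (-1:ℝ)^i := by
        have hi2 : ((-1:ℝ))^i * (-1:ℝ)^i = 1 := by
          rw [← pow_add, ← two_mul, pow_mul]; norm_num
        calc ((-1:ℝ))^(n+1-i) = ((-1:ℝ))^(n+1-i) * (((-1:ℝ))^i * (-1:ℝ)^i) := by
              rw [hi2, mul_one]
          _ = (((-1:ℝ))^(n+1-i) * (-1:ℝ)^i) * (-1:ℝ)^i := by ring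
          _ = (-1:ℝ)^(n+1) * (-1:ℝ)^i := by
              rw [← pow_add, show n+1-i+i = n+1 by omega]
      rw [hs]
      linear_combination ((-1:ℝ)^(n+1) * (-1:ℝ)^i * ((n+1).choose i : ℝ) * x) * h4
    have hx0 : ((-x) ^ (n+1) + ∑ i ∈ Finset.Icc 1 (n+1),
        ((n+1).choose i : ℝ) * x * (x + (i : ℝ)) ^ (i - 1) * ((-x) - (i : ℝ)) ^ (n+1-i)) = 0 := by
      rw [Finset.sum_congr rfl hterm2, ← Finset.mul_sum]
      have hnx : (-x)^(n+1) = (-1:ℝ)^(n+1) * x * x^n := by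
        rw [neg_pow]; ring
      rw [hnx]
      linear_combination ((-1:ℝ)^(n+1) * x) * hv
    have hg0 : (x + (-x))^(n+1) = 0 := by
      simp
    rw [hx0, hg0] at hconst
    linarith
end

section
/- Let p ≥ 1 be an integer and let c_p(x) be the unique formal power series over ℚ with constant term 1 satisfying c_p = 1 + x·c_p^p (the generating function for the Fuss–Catalan numbers of order p). Then for every positive integer k and every integer n ≥ 0, [x^n] c_p(x)^k = (k/(pn+k)) · C(pn+k, n), where C(a,b) is the ordinary binomial coefficient. -/
open PowerSeries

lemma fc_key (p n k : ℕ) (hp : 1 ≤ p) :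
    ((k : ℚ) / ((p * (n+1) + k : ℕ) : ℚ)) * (((p * (n+1) + k).choose (n+1) : ℕ) : ℚ)
      + (((p + k : ℕ) : ℚ) / ((p * n + (p + k) : ℕ) : ℚ)) *
          (((p * n + (p + k)).choose n : ℕ) : ℚ)
    = (((k+1 : ℕ) : ℚ) / ((p * (n+1) + (k+1) : ℕ) : ℚ)) *
        (((p * (n+1) + (k+1)).choose (n+1) : ℕ) : ℚ) := by
  set N := p * (n+1) + k with hN
  have h1 : p * n + (p + k) = N := by rw [hN]; ring
  have h2 : p * (n+1) + (k+1) = N + 1 := by rw [hN]; ring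
  rw [h1, h2]
  have hnN : n + 1 ≤ N := by
    have h := Nat.mul_le_mul_right (n+1) hp
    omega
  have hP : ((N+1).choose (n+1) : ℚ) = (N.choose n : ℚ) + (N.choose (n+1) : ℚ) := by
    rw [Nat.choose_succ_succ]; push_cast; ring
  have hid : (N.choose (n+1) : ℚ) * (n+1) = (N.choose n : ℚ) * ((N : ℚ) - n) := by
    have h := Nat.choose_succ_right_eq N n
    have hc : ((N - n : ℕ) : ℚ) = (N : ℚ) - n := by
      have hn' : n ≤ N := by omega
      push_cast [hn']; ring
    calc (N.choose (n+1) : ℚ) * (n+1) = ((N.choose (n+1) * (n+1) : ℕ) : ℚ) := by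
          push_cast; ring
      _ = ((N.choose n * (N - n) : ℕ) : ℚ) := by rw [h]
      _ = (N.choose n : ℚ) * ((N : ℚ) - n) := by rw [Nat.cast_mul, hc]
  have hNc : (N : ℚ) = (p : ℚ) * ((n : ℚ) + 1) + k := by rw [hN]; push_cast; ring
  have hN0 : (N : ℚ) ≠ 0 := Nat.cast_ne_zero.mpr (by omega)
  have hN1 : ((N : ℚ) + 1) ≠ 0 := by
    have : (0:ℚ) < (N:ℚ) + 1 := by positivity
    linarith
  rw [hP]
  push_cast
  rw [hNc] at hid ⊢
  have hd1 : ((p : ℚ) * ((n:ℚ)+1) + k) ≠ 0 := by rw [← hNc]; exact hN0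
  have hd2 : ((p : ℚ) * ((n:ℚ)+1) + k + 1) ≠ 0 := by
    rw [show (p : ℚ) * ((n:ℚ)+1) + k + 1 = ((p:ℚ)*((n:ℚ)+1)+k) + 1 by ring, ← hNc]; exact hN1
  field_simp
  linear_combination (-(p : ℚ)) * hid

lemma fc_aux (p : ℕ) (hp : 1 ≤ p) (c : PowerSeries ℚ)
    (hc0 : constantCoeff c = 1) (hc : c = 1 + X * c ^ p) :
    ∀ n k : ℕ, 1 ≤ n + k →
      coeff n (c ^ k) =
        ((k : ℚ) / ((p * n + k : ℕ) : ℚ)) * (((p * n + k).choose n : ℕ) : ℚ) := by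
  intro n
  induction n with
  | zero =>
    intro k hk
    have hk0 : (k : ℚ) ≠ 0 := Nat.cast_ne_zero.mpr (by omega)
    simp [coeff_zero_eq_constantCoeff, map_pow, hc0, hk0]
  | succ n ih =>
    intro k
    induction k with
    | zero =>
      intro _
      simp [pow_zero, coeff_one]
    | succ k ihk =>
      intro _
      have hsplit : c ^ (k+1) = c ^ k + X * c ^ (p + k) := by
        calc c ^ (k+1) = c ^ k * c := pow_succ c k
          _ = c ^ k * (1 + X * c ^ p) := by rw [← hc]
          _ = c ^ k + X * c ^ (p + k) := by ring
      rw [hsplit, map_add, coeff_succ_X_mul]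
      rw [ihk (by omega), ih (p + k) (by omega)]
      exact fc_key p n k hp

/-- Fuss–Catalan numbers: if `c_p` is the unique power series over `ℚ` with constant
term `1` satisfying `c_p = 1 + x·c_pᵖ` (`p ≥ 1`), then for `k ≥ 1` and `n ≥ 0`,
`[xⁿ] c_p^k = (k/(pn+k))·C(pn+k, n)`. -/
theorem fuss_catalan_coeff (p : ℕ) (hp : 1 ≤ p) (c : PowerSeries ℚ)
    (hc0 : constantCoeff c = 1) (hc : c = 1 + X * c ^ p)
    (k : ℕ) (hk : 1 ≤ k) (n : ℕ) :
    coeff n (c ^ k) =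
      ((k : ℚ) / ((p * n + k : ℕ) : ℚ)) * (((p * n + k).choose n : ℕ) : ℚ) := by
  exact fc_aux p hp c hc0 hc n k (by omega)
end
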